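/- arXiv:1508.02324 — 5 statements merged into one kernel-verified Lean document; each statement's English description precedes it below -/
import Mathlib

section
/- Let N1, N2, N3, N4 ≥ 1, let A be a third-order tensor of size N1 × N2 × N3 and B a third-order tensor of size N2 × N4 × N3 (both with entries in ℂ), and let C = A ∗ B be their t-product. Then for every i : Fin N1, j : Fin N4 and every frequency k : ZMod N3, one has (dft C(i,j))(k) = ∑_{l : Fin N2} (dft A(i,l))(k) · (dft B(l,j))(k); equivalently, each frontal slice of the Fourier-transformed tensor of C is the matrix product of the corresponding frontal slices of the Fourier-transformed tensors of A and B. -/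
open scoped BigOperators

/-- Circular convolution of two tubes of length `n`. -/
noncomputable def cconv {n : ℕ} [NeZero n] (a b : ZMod n → ℂ) : ZMod n → ℂ :=
  fun t => ∑ s : ZMod n, a s * b (t - s)

/-- Discrete Fourier transform of a tube of length `n`. -/
noncomputable def dft {n : ℕ} [NeZero n] (a : ZMod n → ℂ) : ZMod n → ℂ :=
  fun k => ∑ t : ZMod n,
    a t * Complex.exp (-2 * (Real.pi : ℂ) * Complex.I * ((k.val : ℂ) * (t.val : ℂ)) / (n : ℂ))

/-- t-product of third-order tensors. -/
noncomputable def tProduct {N1 N2 N3 N4 : ℕ} [NeZero N3]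
    (A : Fin N1 → Fin N2 → ZMod N3 → ℂ) (B : Fin N2 → Fin N4 → ZMod N3 → ℂ) :
    Fin N1 → Fin N4 → ZMod N3 → ℂ :=
  fun i j => ∑ l : Fin N2, cconv (A i l) (B l j)

private lemma zeta_pow_n {n : ℕ} [NeZero n] (k : ZMod n) :
    Complex.exp (-2 * (Real.pi : ℂ) * Complex.I * (k.val : ℂ) / (n : ℂ)) ^ n = 1 := by
  have hn : (n : ℂ) ≠ 0 := Nat.cast_ne_zero.mpr (NeZero.ne n)
  rw [← Complex.exp_nat_mul]
  have : (n : ℂ) * (-2 * (Real.pi : ℂ) * Complex.I * (k.val : ℂ) / (n : ℂ))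
      = (-(k.val : ℤ) : ℂ) * (2 * Real.pi * Complex.I) := by
    push_cast; field_simp
  rw [this]
  simpa using Complex.exp_int_mul_two_pi_mul_I (-(k.val : ℤ))

private lemma zeta_pow_val {n : ℕ} [NeZero n] (k : ZMod n) (s u : ZMod n) :
    Complex.exp (-2 * (Real.pi : ℂ) * Complex.I * (k.val : ℂ) / (n : ℂ)) ^ (s + u).val
      = Complex.exp (-2 * (Real.pi : ℂ) * Complex.I * (k.val : ℂ) / (n : ℂ)) ^ s.val *
        Complex.exp (-2 * (Real.pi : ℂ) * Complex.I * (k.val : ℂ) / (n : ℂ)) ^ u.val := by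
  set ζ := Complex.exp (-2 * (Real.pi : ℂ) * Complex.I * (k.val : ℂ) / (n : ℂ))
  have hζ : ζ ^ n = 1 := zeta_pow_n k
  have hmod : ∀ m : ℕ, ζ ^ (m % n) = ζ ^ m := by
    intro m
    conv_rhs => rw [← Nat.div_add_mod m n]
    rw [pow_add, pow_mul, hζ, one_pow, one_mul]
  rw [ZMod.val_add, hmod, pow_add]

private lemma dft_eq_zeta {n : ℕ} [NeZero n] (a : ZMod n → ℂ) (k : ZMod n) :
    dft a k = ∑ t : ZMod n,
      a t * Complex.exp (-2 * (Real.pi : ℂ) * Complex.I * (k.val : ℂ) / (n : ℂ)) ^ t.val := by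
  unfold dft
  refine Finset.sum_congr rfl fun t _ => ?_
  rw [← Complex.exp_nat_mul]
  congr 1
  ring

private lemma dft_cconv {n : ℕ} [NeZero n] (a b : ZMod n → ℂ) (k : ZMod n) :
    dft (cconv a b) k = dft a k * dft b k := by
  rw [dft_eq_zeta, dft_eq_zeta, dft_eq_zeta]
  set ζ := Complex.exp (-2 * (Real.pi : ℂ) * Complex.I * (k.val : ℂ) / (n : ℂ))
  unfold cconv
  rw [Finset.sum_mul_sum]
  rw [show (∑ t : ZMod n, (∑ s : ZMod n, a s * b (t - s)) * ζ ^ t.val)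
      = ∑ t : ZMod n, ∑ s : ZMod n, a s * b (t - s) * ζ ^ t.val by
    exact Finset.sum_congr rfl fun t _ => by rw [Finset.sum_mul]]
  rw [Finset.sum_comm]
  refine Finset.sum_congr rfl fun s _ => ?_
  refine Fintype.sum_equiv (Equiv.subRight s) _ _ fun t => ?_
  simp only [Equiv.subRight_apply]
  have h2 : ζ ^ t.val = ζ ^ s.val * ζ ^ (t - s).val := by
    have h3 := zeta_pow_val k s (t - s)
    rwa [show s + (t - s) = t by ring] at h3
  rw [h2]; ring

/-- the frontal slices of the Fourier transform of a t-product are the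
matrix products of the corresponding frontal slices of the Fourier transforms. -/
theorem stmt0 (N1 N2 N3 N4 : ℕ) [NeZero N3]
    (hN1 : 1 ≤ N1) (hN2 : 1 ≤ N2) (hN3 : 1 ≤ N3) (hN4 : 1 ≤ N4)
    (A : Fin N1 → Fin N2 → ZMod N3 → ℂ) (B : Fin N2 → Fin N4 → ZMod N3 → ℂ)
    (C : Fin N1 → Fin N4 → ZMod N3 → ℂ) (hC : C = tProduct A B)
    (i : Fin N1) (j : Fin N4) (k : ZMod N3) :
    dft (C i j) k = ∑ l : Fin N2, dft (A i l) k * dft (B l j) k := by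
  subst hC
  have h : dft (tProduct A B i j) k = ∑ l : Fin N2, dft (cconv (A i l) (B l j)) k := by
    unfold tProduct dft
    simp only [Finset.sum_apply, Finset.sum_mul]
    exact Finset.sum_comm
  rw [h]
  exact Finset.sum_congr rfl fun l _ => dft_cconv _ _ _
end

section
/- Let N1, N2, N3 ≥ 1, r ∈ ℕ, and let C be a third-order tensor of size N1 × N2 × N3 with entries in ℂ. There exist tensors X of size N1 × r × N3 and Y of size r × N2 × N3 with C = X ∗ Y (t-product) if and only if for every frequency k : ZMod N3 the N1 × N2 complex matrix C̆ₖ with entries (C̆ₖ)(i,j) = (dft C(i,j))(k) has rank at most r. (In particular, a tensor has tubal-rank at most r exactly when every frontal slice of its Fourier-domain tensor has matrix rank at most r.) -/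
open scoped BigOperators

/-- Our `dft` agrees with Mathlib's `ZMod.dft`. -/
lemma dft_eq_zmod_dft {n : ℕ} [NeZero n] (a : ZMod n → ℂ) : dft a = ZMod.dft a := by
  funext k
  rw [dft, ZMod.dft_apply]
  refine Finset.sum_congr rfl fun t _ => ?_
  rw [smul_eq_mul, mul_comm]
  congr 1
  have h1 : -(t * k) = ((-(t.val * k.val : ℤ) : ℤ) : ZMod n) := by
    push_cast
    rw [ZMod.natCast_zmod_val, ZMod.natCast_zmod_val]
  rw [h1, ZMod.stdAddChar_coe]
  congr 1
  push_cast
  ring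

/-- Convolution theorem. -/
lemma zmod_dft_cconv {n : ℕ} [NeZero n] (a b : ZMod n → ℂ) (k : ZMod n) :
    ZMod.dft (cconv a b) k = ZMod.dft a k * ZMod.dft b k := by
  rw [ZMod.dft_apply, ZMod.dft_apply, ZMod.dft_apply,
    Finset.sum_mul_sum Finset.univ Finset.univ _ _]
  simp only [cconv, smul_eq_mul, Finset.mul_sum]
  rw [Finset.sum_comm]
  refine Finset.sum_congr rfl fun s _ => ?_
  rw [← Equiv.sum_comp (Equiv.addLeft s)
    (fun t => ZMod.stdAddChar (-(t * k)) * (a s * b (t - s)))]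
  refine Finset.sum_congr rfl fun u _ => ?_
  simp only [Equiv.coe_addLeft]
  have hchi : ZMod.stdAddChar (-((s + u) * k))
      = ZMod.stdAddChar (-(s * k)) * ZMod.stdAddChar (-(u * k)) := by
    rw [← AddChar.map_add_eq_mul]
    congr 1
    ring
  rw [add_sub_cancel_left, hchi]
  ring

lemma toMatrix'_mulVecLin {m n : ℕ} (M : Matrix (Fin m) (Fin n) ℂ) :
    LinearMap.toMatrix' M.mulVecLin = M := by
  ext i j
  rw [LinearMap.toMatrix'_apply]
  simp [Matrix.mulVecLin_apply, Matrix.mulVec, dotProduct, Pi.single_apply, mul_ite,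
    Finset.sum_ite_eq']

/-- Rank-factorization characterization of rank ≤ r. -/
lemma rank_le_iff_factor {m n : ℕ} (r : ℕ) (M : Matrix (Fin m) (Fin n) ℂ) :
    M.rank ≤ r ↔ ∃ (A : Matrix (Fin m) (Fin r) ℂ) (B : Matrix (Fin r) (Fin n) ℂ),
      M = A * B := by
  constructor
  · intro h
    set V := LinearMap.range M.mulVecLin with hV
    have hd : Module.finrank ℂ V ≤ r := h
    let b : Module.Basis (Fin (Module.finrank ℂ V)) ℂ V := Module.finBasis ℂ V
    let emb : Fin (Module.finrank ℂ V) → Fin r := Fin.castLE hd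
    let jmap : (Fin (Module.finrank ℂ V) → ℂ) →ₗ[ℂ] (Fin r → ℂ) :=
      Function.ExtendByZero.linearMap ℂ emb
    let pmap : (Fin r → ℂ) →ₗ[ℂ] (Fin (Module.finrank ℂ V) → ℂ) :=
      LinearMap.funLeft ℂ ℂ emb
    have hpj : ∀ x, pmap (jmap x) = x := by
      intro x
      funext i
      show Function.extend emb x 0 (emb i) = x i
      rw [Function.Injective.extend_apply (Fin.castLE_injective hd)]
    let glin : (Fin r → ℂ) →ₗ[ℂ] (Fin m → ℂ) :=
      V.subtype ∘ₗ (b.equivFun.symm : (Fin (Module.finrank ℂ V) → ℂ) →ₗ[ℂ] V) ∘ₗ pmap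
    let flin : (Fin n → ℂ) →ₗ[ℂ] (Fin r → ℂ) :=
      jmap ∘ₗ (b.equivFun : V →ₗ[ℂ] (Fin (Module.finrank ℂ V) → ℂ)) ∘ₗ
        M.mulVecLin.rangeRestrict
    have hcomp : glin ∘ₗ flin = M.mulVecLin := by
      apply LinearMap.ext
      intro x
      simp only [glin, flin, LinearMap.comp_apply, LinearEquiv.coe_coe]
      rw [hpj, LinearEquiv.symm_apply_apply]
      rfl
    refine ⟨LinearMap.toMatrix' glin, LinearMap.toMatrix' flin, ?_⟩
    rw [← LinearMap.toMatrix'_comp, hcomp, toMatrix'_mulVecLin]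
  · rintro ⟨A, B, rfl⟩
    refine le_trans (Matrix.rank_mul_le_left A B) ?_
    simpa using Matrix.rank_le_card_width A

/-- a tensor factors as a t-product with inner dimension `r` iff every
frontal slice of its Fourier-domain tensor has matrix rank at most `r`. -/
theorem stmt2 (N1 N2 N3 : ℕ) [NeZero N3] (hN1 : 1 ≤ N1) (hN2 : 1 ≤ N2) (hN3 : 1 ≤ N3)
    (r : ℕ) (C : Fin N1 → Fin N2 → ZMod N3 → ℂ) :
    (∃ (X : Fin N1 → Fin r → ZMod N3 → ℂ) (Y : Fin r → Fin N2 → ZMod N3 → ℂ),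
        C = tProduct X Y) ↔
      ∀ k : ZMod N3, (Matrix.of fun i j => dft (C i j) k).rank ≤ r := by
  have hdft_tprod : ∀ (X : Fin N1 → Fin r → ZMod N3 → ℂ)
      (Y : Fin r → Fin N2 → ZMod N3 → ℂ) (i : Fin N1) (j : Fin N2) (k : ZMod N3),
      ZMod.dft (tProduct X Y i j) k = ∑ l : Fin r, ZMod.dft (X i l) k * ZMod.dft (Y l j) k := by
    intro X Y i j k
    have : tProduct X Y i j = ∑ l : Fin r, cconv (X i l) (Y l j) := rfl
    rw [this, map_sum, Finset.sum_apply]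
    exact Finset.sum_congr rfl fun l _ => zmod_dft_cconv _ _ k
  constructor
  · rintro ⟨X, Y, rfl⟩ k
    rw [rank_le_iff_factor]
    refine ⟨Matrix.of fun i l => ZMod.dft (X i l) k,
            Matrix.of fun l j => ZMod.dft (Y l j) k, ?_⟩
    ext i j
    simp only [Matrix.mul_apply, Matrix.of_apply, dft_eq_zmod_dft]
    exact hdft_tprod X Y i j k
  · intro h
    choose A B hAB using fun k => (rank_le_iff_factor r _).mp (h k)
    refine ⟨fun i l => ZMod.dft.symm (fun k => A k i l),
            fun l j => ZMod.dft.symm (fun k => B k l j), ?_⟩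
    funext i j
    apply ZMod.dft.injective
    funext k
    rw [hdft_tprod]
    have hC : ZMod.dft (C i j) k = (A k * B k) i j := by
      rw [← hAB k]
      simp [dft_eq_zmod_dft]
    rw [hC, Matrix.mul_apply]
    refine Finset.sum_congr rfl fun l _ => ?_
    rw [LinearEquiv.apply_symm_apply, LinearEquiv.apply_symm_apply]
end

section
/- Best tubal-rank-r approximation: Let T be a third-order tensor of size N1 × N2 × N3 with entries in ℂ and let T = U ∗ Θ ∗ Vᴴ be a t-SVD of T (U, V satisfying Uᴴ ∗ U = U ∗ Uᴴ = I, Vᴴ ∗ V = V ∗ Vᴴ = I, Θ f-diagonal) such that for every frequency k : ZMod N3 the values (dft Θ(i,i))(k) are nonnegative reals, nonincreasing in i. For r ≤ min(N1, N2) define the truncation T_r by T_r(a,b) = ∑_{i < r} U(a,i) ⋆ Θ(i,i) ⋆ (Vᴴ)(i,b). Then ‖T − T_r‖_F = inf{ ‖T − X ∗ Y‖_F : X a tensor of size N1 × r × N3, Y a tensor of size r × N2 × N3 }, i.e. the truncated t-SVD attains the least Frobenius-norm error over all t-products with inner dimension r. -/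
open scoped BigOperators

/-- Conjugate transpose of a third-order tensor. -/
noncomputable def tConjTranspose {N1 N2 N3 : ℕ}
    (A : Fin N1 → Fin N2 → ZMod N3 → ℂ) : Fin N2 → Fin N1 → ZMod N3 → ℂ :=
  fun i j t => starRingEnd ℂ (A j i (-t))

/-- Identity tensor of size `N × N × N3`. -/
noncomputable def tId (N N3 : ℕ) : Fin N → Fin N → ZMod N3 → ℂ :=
  fun i j t => if i = j ∧ t = 0 then 1 else 0

/-- Frobenius norm of a third-order tensor. -/
noncomputable def frobNorm {N1 N2 N3 : ℕ} [NeZero N3]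
    (T : Fin N1 → Fin N2 → ZMod N3 → ℂ) : ℝ :=
  Real.sqrt (∑ i : Fin N1, ∑ j : Fin N2, ∑ t : ZMod N3, ‖T i j t‖ ^ 2)

namespace TSVD
open Finset Complex
open scoped Matrix

variable {n : ℕ} [NeZero n]

lemma norm_sq_eq_mul_conj (z : ℂ) : (‖z‖ : ℝ) ^ 2 = (z * (starRingEnd ℂ) z).re := by
  rw [Complex.mul_conj, Complex.ofReal_re, Complex.normSq_eq_norm_sq]

lemma dft_eq (a : ZMod n → ℂ) (k : ZMod n) : dft a k = ZMod.dft a k := by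
  rw [ZMod.dft_apply]
  refine Finset.sum_congr rfl fun t _ => ?_
  have h1 : -(t * k) = ((-(t.val * k.val : ℤ) : ℤ) : ZMod n) := by
    push_cast [ZMod.natCast_val, ZMod.cast_id]
    ring
  rw [h1, ZMod.stdAddChar_coe, smul_eq_mul, mul_comm]
  congr 1
  push_cast
  ring

lemma conj_stdAddChar (x : ZMod n) :
    (starRingEnd ℂ) (ZMod.stdAddChar x) = ZMod.stdAddChar (-x) := by
  have key : ∀ j : ℤ, (starRingEnd ℂ) (ZMod.stdAddChar ((j : ℤ) : ZMod n))
      = ZMod.stdAddChar ((-j : ℤ) : ZMod n) := by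
    intro j
    rw [ZMod.stdAddChar_coe, ZMod.stdAddChar_coe, ← Complex.exp_conj]
    congr 1
    simp [map_div₀, Complex.conj_I, map_ofNat]
  have hx : ((x.val : ℤ) : ZMod n) = x := by
    push_cast [ZMod.natCast_val, ZMod.cast_id]
    rfl
  calc (starRingEnd ℂ) (ZMod.stdAddChar x)
      = (starRingEnd ℂ) (ZMod.stdAddChar ((x.val : ℤ) : ZMod n)) := by rw [hx]
    _ = ZMod.stdAddChar ((-(x.val : ℤ) : ℤ) : ZMod n) := key _
    _ = ZMod.stdAddChar (-x) := by rw [Int.cast_neg, hx]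

lemma sum_char (m : ZMod n) :
    ∑ k : ZMod n, ZMod.stdAddChar (k * m) = if m = 0 then (n : ℂ) else 0 := by
  simpa [ZMod.card] using AddChar.sum_mulShift m (ZMod.isPrimitive_stdAddChar n)

lemma dft_conv (a b : ZMod n → ℂ) (k : ZMod n) :
    ZMod.dft (cconv a b) k = ZMod.dft a k * ZMod.dft b k := by
  rw [ZMod.dft_apply, ZMod.dft_apply, ZMod.dft_apply]
  calc ∑ t : ZMod n, ZMod.stdAddChar (-(t * k)) • cconv a b t
      = ∑ s : ZMod n, ∑ t : ZMod n, ZMod.stdAddChar (-(t * k)) * (a s * b (t - s)) := by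
        simp only [cconv, smul_eq_mul, Finset.mul_sum]
        exact Finset.sum_comm
    _ = ∑ s : ZMod n, (ZMod.stdAddChar (-(s * k)) • a s) *
          ∑ u : ZMod n, ZMod.stdAddChar (-(u * k)) • b u := by
        refine Finset.sum_congr rfl fun s _ => ?_
        rw [Finset.mul_sum]
        rw [← Equiv.sum_comp (Equiv.addRight s)
          (fun t => ZMod.stdAddChar (-(t * k)) * (a s * b (t - s)))]
        refine Finset.sum_congr rfl fun u _ => ?_
        simp only [Equiv.coe_addRight, add_sub_cancel_right, smul_eq_mul]
        have h : -((u + s) * k) = -(s * k) + -(u * k) := by ring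
        rw [h, AddChar.map_add_eq_mul]
        ring
    _ = _ := by rw [← Finset.sum_mul]

lemma dft_parseval (a : ZMod n → ℂ) :
    ∑ k : ZMod n, ‖ZMod.dft a k‖ ^ 2 = (n : ℝ) * ∑ t : ZMod n, ‖a t‖ ^ 2 := by
  have key : ∑ k : ZMod n, ZMod.dft a k * (starRingEnd ℂ) (ZMod.dft a k)
      = (n : ℂ) * ∑ t : ZMod n, a t * (starRingEnd ℂ) (a t) := by
    simp only [ZMod.dft_apply, smul_eq_mul, map_sum, map_mul, conj_stdAddChar]
    have swap : ∀ F : ZMod n → ZMod n → ZMod n → ℂ,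
        ∑ k : ZMod n, ∑ t : ZMod n, ∑ s : ZMod n, F k t s
          = ∑ t : ZMod n, ∑ s : ZMod n, ∑ k : ZMod n, F k t s := fun F =>
      (Finset.sum_comm).trans (Finset.sum_congr rfl fun _ _ => Finset.sum_comm)
    calc ∑ k : ZMod n, (∑ t : ZMod n, ZMod.stdAddChar (-(t * k)) * a t) *
          ∑ s : ZMod n, ZMod.stdAddChar (-(-(s * k))) * (starRingEnd ℂ) (a s)
        = ∑ k : ZMod n, ∑ s : ZMod n, ∑ t : ZMod n,
            (ZMod.stdAddChar (-(t * k)) * a t) *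
              (ZMod.stdAddChar (-(-(s * k))) * (starRingEnd ℂ) (a s)) := by
          simp only [Finset.sum_mul, Finset.mul_sum]
      _ = ∑ k : ZMod n, ∑ t : ZMod n, ∑ s : ZMod n,
            (ZMod.stdAddChar (-(t * k)) * a t) *
              (ZMod.stdAddChar (-(-(s * k))) * (starRingEnd ℂ) (a s)) :=
          Finset.sum_congr rfl fun _ _ => Finset.sum_comm
      _ = ∑ t : ZMod n, ∑ s : ZMod n, ∑ k : ZMod n,
            (ZMod.stdAddChar (-(t * k)) * a t) *
              (ZMod.stdAddChar (-(-(s * k))) * (starRingEnd ℂ) (a s)) := swap _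
      _ = ∑ t : ZMod n, ∑ s : ZMod n, (a t * (starRingEnd ℂ) (a s)) *
            ∑ k : ZMod n, ZMod.stdAddChar (k * (s - t)) := by
          refine Finset.sum_congr rfl fun t _ => Finset.sum_congr rfl fun s _ => ?_
          rw [Finset.mul_sum]
          refine Finset.sum_congr rfl fun k _ => ?_
          have h : k * (s - t) = -(t * k) + -(-(s * k)) := by ring
          rw [h, AddChar.map_add_eq_mul]
          ring
      _ = ∑ t : ZMod n, (a t * (starRingEnd ℂ) (a t)) * (n : ℂ) := by
          refine Finset.sum_congr rfl fun t _ => ?_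
          rw [Finset.sum_eq_single t]
          · simp [sum_char]
          · intro s _ hs
            simp [sum_char, sub_eq_zero, hs]
          · simp
      _ = (n : ℂ) * ∑ t : ZMod n, a t * (starRingEnd ℂ) (a t) := by
          rw [← Finset.sum_mul, mul_comm]
  have h3 : ∑ t : ZMod n, a t * (starRingEnd ℂ) (a t)
      = ((∑ t : ZMod n, ‖a t‖ ^ 2 : ℝ) : ℂ) := by
    push_cast
    refine Finset.sum_congr rfl fun t _ => ?_
    rw [Complex.mul_conj, Complex.normSq_eq_norm_sq]
    norm_cast
  calc ∑ k : ZMod n, ‖ZMod.dft a k‖ ^ 2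
      = (∑ k : ZMod n, ZMod.dft a k * (starRingEnd ℂ) (ZMod.dft a k)).re := by
        rw [Complex.re_sum]
        exact Finset.sum_congr rfl fun k _ => norm_sq_eq_mul_conj _
    _ = ((n : ℂ) * ((∑ t : ZMod n, ‖a t‖ ^ 2 : ℝ) : ℂ)).re := by rw [key, h3]
    _ = (n : ℝ) * ∑ t : ZMod n, ‖a t‖ ^ 2 := by
        rw [← Complex.ofReal_natCast, ← Complex.ofReal_mul, Complex.ofReal_re]

lemma dft_delta (k : ZMod n) :
    ZMod.dft (fun t => if t = 0 then (1 : ℂ) else 0) k = 1 := by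
  rw [ZMod.dft_apply]
  rw [Finset.sum_eq_single 0]
  · simp
  · intro s _ hs; simp [hs]
  · simp

lemma dft_conjrev (a : ZMod n → ℂ) (k : ZMod n) :
    ZMod.dft (fun t => (starRingEnd ℂ) (a (-t))) k = (starRingEnd ℂ) (ZMod.dft a k) := by
  rw [ZMod.dft_apply, ZMod.dft_apply, map_sum]
  refine Fintype.sum_equiv (Equiv.neg (ZMod n)) _ _ fun u => ?_
  simp only [Equiv.neg_apply, neg_neg, smul_eq_mul, map_mul, conj_stdAddChar, neg_mul, neg_neg]

/-! ### Matrix Frobenius norm machinery -/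

noncomputable def frobSq {m p : ℕ} (M : Matrix (Fin m) (Fin p) ℂ) : ℝ :=
  ∑ i, ∑ j, ‖M i j‖ ^ 2

lemma frobSq_nonneg {m p : ℕ} (M : Matrix (Fin m) (Fin p) ℂ) : 0 ≤ frobSq M :=
  Finset.sum_nonneg fun _ _ => Finset.sum_nonneg fun _ _ => sq_nonneg _

lemma frobSq_eq_trace {m p : ℕ} (M : Matrix (Fin m) (Fin p) ℂ) :
    frobSq M = (Matrix.trace (Mᴴ * M)).re := by
  rw [Matrix.trace, Complex.re_sum, frobSq, Finset.sum_comm]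
  refine Finset.sum_congr rfl fun j _ => ?_
  rw [Matrix.diag_apply, Matrix.mul_apply, Complex.re_sum]
  refine Finset.sum_congr rfl fun i _ => ?_
  rw [Matrix.conjTranspose_apply, mul_comm, norm_sq_eq_mul_conj]
  rfl

lemma frobSq_mul_unitary {m p : ℕ} (P : Matrix (Fin m) (Fin m) ℂ)
    (M : Matrix (Fin m) (Fin p) ℂ) (Q : Matrix (Fin p) (Fin p) ℂ)
    (hP : Pᴴ * P = 1) (hQ : Q * Qᴴ = 1) : frobSq (P * M * Q) = frobSq M := by
  rw [frobSq_eq_trace, frobSq_eq_trace]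
  congr 1
  have h1 : (P * M * Q)ᴴ * (P * M * Q) = Qᴴ * (Mᴴ * M) * Q := by
    simp only [Matrix.conjTranspose_mul, Matrix.mul_assoc]
    rw [← Matrix.mul_assoc Pᴴ P, hP, Matrix.one_mul]
  rw [h1, Matrix.trace_mul_cycle, ← Matrix.mul_assoc, hQ, Matrix.one_mul]

lemma sum_ite_lt {m r : ℕ} (hrm : r ≤ m) (g : ℕ → ℝ) :
    ∑ j : Fin m, (if (j : ℕ) < r then g (j : ℕ) else 0) = ∑ j ∈ Finset.range r, g j := by
  rw [Fin.sum_univ_eq_sum_range (fun j => if j < r then g j else 0) m, ← Finset.sum_filter]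
  congr 1
  ext x
  simp only [Finset.mem_filter, Finset.mem_range]
  omega

lemma sum_mul_le_head {m r : ℕ} (c p : Fin m → ℝ) (hc0 : ∀ j, 0 ≤ c j)
    (hcd : ∀ i j : Fin m, (i : ℕ) ≤ (j : ℕ) → c j ≤ c i)
    (hp0 : ∀ j, 0 ≤ p j) (hp1 : ∀ j, p j ≤ 1) (hps : ∑ j, p j ≤ (r : ℝ)) :
    ∑ j, c j * p j ≤ ∑ j : Fin m, (if (j : ℕ) < r then c j else 0) := by
  by_cases hrm : m ≤ r
  · have h : ∀ j : Fin m, (if (j : ℕ) < r then c j else 0) = c j :=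
      fun j => if_pos (lt_of_lt_of_le j.isLt hrm)
    rw [Finset.sum_congr rfl fun j _ => h j]
    exact Finset.sum_le_sum fun j _ => by nlinarith [hc0 j, hp1 j, hp0 j]
  · push_neg at hrm
    set ρ : Fin m := ⟨r, hrm⟩ with hρ
    have key : ∀ j : Fin m, c j * p j ≤ (if (j : ℕ) < r then c j - c ρ else 0) + c ρ * p j := by
      intro j
      by_cases h : (j : ℕ) < r
      · rw [if_pos h]
        have h1 : c ρ ≤ c j := hcd j ρ (by simp only [hρ]; omega)
        nlinarith [hp1 j, hp0 j]
      · rw [if_neg h]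
        have h1 : c j ≤ c ρ := hcd ρ j (by simp only [hρ]; omega)
        nlinarith [hp0 j]
    have h2 : ∑ j : Fin m, (if (j : ℕ) < r then c ρ else 0) = r * c ρ := by
      rw [sum_ite_lt hrm.le (fun _ => c ρ), Finset.sum_const, Finset.card_range,
        nsmul_eq_mul]
    have h3 : c ρ * ∑ j, p j ≤ c ρ * r := mul_le_mul_of_nonneg_left hps (hc0 ρ)
    calc ∑ j, c j * p j
        ≤ ∑ j : Fin m, ((if (j : ℕ) < r then c j - c ρ else 0) + c ρ * p j) :=
          Finset.sum_le_sum fun j _ => key j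
      _ = (∑ j : Fin m, (if (j : ℕ) < r then c j else 0)
            - ∑ j : Fin m, (if (j : ℕ) < r then c ρ else 0)) + c ρ * ∑ j, p j := by
          rw [Finset.sum_add_distrib, ← Finset.mul_sum, ← Finset.sum_sub_distrib]
          congr 1
          refine Finset.sum_congr rfl fun j _ => ?_
          split <;> simp
      _ ≤ ∑ j : Fin m, (if (j : ℕ) < r then c j else 0) := by rw [h2]; linarith

set_option maxHeartbeats 1600000 in
lemma EY_core {n1 n2 r : ℕ} (σ : ℕ → ℝ) (hσ0 : ∀ i, 0 ≤ σ i)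
    (hσd : ∀ i j : ℕ, i ≤ j → σ j ≤ σ i)
    (D : Matrix (Fin n1) (Fin n2) ℂ)
    (hD : ∀ i j, D i j = if (i : ℕ) = (j : ℕ) then (σ (i : ℕ) : ℂ) else 0)
    (X : Matrix (Fin n1) (Fin r) ℂ) (Y : Matrix (Fin r) (Fin n2) ℂ) :
    (∑ j : Fin n2, if r ≤ (j : ℕ) ∧ (j : ℕ) < n1 then σ (j : ℕ) ^ 2 else 0)
      ≤ frobSq (D - X * Y) := by
  classical
  let toE : (Fin n1 → ℂ) ≃ₗ[ℂ] (EuclideanSpace ℂ (Fin n1)) := (WithLp.linearEquiv 2 ℂ (Fin n1 → ℂ)).symm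
  have toE_apply : ∀ (v : Fin n1 → ℂ) (i : Fin n1), toE v i = v i := fun v i => rfl
  let K : Submodule ℂ (EuclideanSpace ℂ (Fin n1)) := LinearMap.range (toE.toLinearMap ∘ₗ X.mulVecLin)
  have hrank : Module.finrank ℂ K ≤ r := by
    refine le_trans (LinearMap.finrank_range_le _) ?_
    rw [Module.finrank_fintype_fun_eq_card, Fintype.card_fin]
  have normE : ∀ v : (EuclideanSpace ℂ (Fin n1)), ‖v‖ ^ 2 = ∑ i, ‖v i‖ ^ 2 := by
    intro v
    rw [EuclideanSpace.norm_eq, Real.sq_sqrt (Finset.sum_nonneg fun i _ => sq_nonneg _)]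
  have pyth : ∀ v : (EuclideanSpace ℂ (Fin n1)), ‖(K.orthogonalProjectionOnto v : (EuclideanSpace ℂ (Fin n1)))‖ ^ 2
      + ‖v - (K.orthogonalProjectionOnto v : (EuclideanSpace ℂ (Fin n1)))‖ ^ 2 = ‖v‖ ^ 2 := by
    intro v
    have h1 := Submodule.norm_sq_eq_add_norm_sq_projection v K
    rw [Submodule.orthogonalProjectionOnto_orthogonal v] at h1
    have h2 : ‖(⟨v - K.starProjection v,
        Submodule.sub_starProjection_mem_orthogonal v⟩ : Kᗮ)‖
        = ‖v - (K.orthogonalProjectionOnto v : (EuclideanSpace ℂ (Fin n1)))‖ := rfl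
    rw [h2] at h1
    have h3 : ‖K.orthogonalProjectionOnto v‖ = ‖(K.orthogonalProjectionOnto v : (EuclideanSpace ℂ (Fin n1)))‖ := rfl
    rw [h3] at h1
    linarith
  have dist_le : ∀ (v w : (EuclideanSpace ℂ (Fin n1))), w ∈ K →
      ‖v - (K.orthogonalProjectionOnto v : (EuclideanSpace ℂ (Fin n1)))‖ ^ 2 ≤ ‖v - w‖ ^ 2 := by
    intro v w hw
    have hvw : v - w = (v - (K.orthogonalProjectionOnto v : (EuclideanSpace ℂ (Fin n1))))
        + ((K.orthogonalProjectionOnto v : (EuclideanSpace ℂ (Fin n1))) - w) := by abel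
    have hmem : (K.orthogonalProjectionOnto v : (EuclideanSpace ℂ (Fin n1))) - w ∈ K :=
      Submodule.sub_mem K (Submodule.coe_mem _) hw
    have horth : inner ℂ (v - (K.orthogonalProjectionOnto v : (EuclideanSpace ℂ (Fin n1))))
        ((K.orthogonalProjectionOnto v : (EuclideanSpace ℂ (Fin n1))) - w) = (0 : ℂ) :=
      Submodule.inner_left_of_mem_orthogonal hmem
        (Submodule.sub_starProjection_mem_orthogonal v)
    have hpy := norm_add_sq_eq_norm_sq_add_norm_sq_of_inner_eq_zero _ _ horth
    rw [hvw]
    simp only [pow_two]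
    nlinarith [hpy, mul_self_nonneg ‖(K.orthogonalProjectionOnto v : (EuclideanSpace ℂ (Fin n1))) - w‖]
  let e : Fin n1 → (EuclideanSpace ℂ (Fin n1)) := fun i => EuclideanSpace.single i (1 : ℂ)
  let q : Fin n1 → ℝ := fun i => ‖(K.orthogonalProjectionOnto (e i) : (EuclideanSpace ℂ (Fin n1)))‖ ^ 2
  have q_nonneg : ∀ i, 0 ≤ q i := fun i => sq_nonneg _
  have q_le_one : ∀ i, q i ≤ 1 := by
    intro i
    have h1 := pyth (e i)
    have he : ‖e i‖ = 1 := by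
      simp only [e]
      rw [EuclideanSpace.norm_single, norm_one]
    rw [he] at h1
    simp only [q]
    nlinarith [sq_nonneg ‖e i - (K.orthogonalProjectionOnto (e i) : (EuclideanSpace ℂ (Fin n1)))‖]
  have q_sum : ∑ i, q i ≤ (r : ℝ) := by
    let b := stdOrthonormalBasis ℂ K
    have normE' : ∀ v : EuclideanSpace ℂ (Fin (Module.finrank ℂ K)),
        ‖v‖ ^ 2 = ∑ i, ‖v i‖ ^ 2 := by
      intro v
      rw [EuclideanSpace.norm_eq, Real.sq_sqrt (Finset.sum_nonneg fun i _ => sq_nonneg _)]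
    have hq : ∀ i, q i = ∑ l : Fin (Module.finrank ℂ K), ‖((b l : (EuclideanSpace ℂ (Fin n1)))) i‖ ^ 2 := by
      intro i
      have h1 : ‖(K.orthogonalProjectionOnto (e i) : (EuclideanSpace ℂ (Fin n1)))‖
          = ‖b.repr (K.orthogonalProjectionOnto (e i))‖ := by
        rw [b.repr.norm_map]
        rfl
      have h2 : ∀ l, b.repr (K.orthogonalProjectionOnto (e i)) l
          = inner ℂ ((b l : (EuclideanSpace ℂ (Fin n1)))) (e i) := fun l => by
        rw [b.repr_apply_apply, Submodule.inner_orthogonalProjectionOnto_eq_of_mem_left]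
      simp only [q]
      rw [h1, normE']
      refine Finset.sum_congr rfl fun l _ => ?_
      rw [h2 l]
      have h3 : (inner ℂ ((b l : (EuclideanSpace ℂ (Fin n1)))) (e i) : ℂ) = 1 * (starRingEnd ℂ) ((b l : (EuclideanSpace ℂ (Fin n1))) i) :=
        EuclideanSpace.inner_single_right i 1 ((b l : (EuclideanSpace ℂ (Fin n1))))
      rw [h3, one_mul, RCLike.norm_conj]
    have hsum : ∑ i, q i = (Module.finrank ℂ K : ℝ) := by
      rw [Finset.sum_congr rfl fun i _ => hq i, Finset.sum_comm]
      have hb : ∀ l, ∑ i, ‖((b l : (EuclideanSpace ℂ (Fin n1)))) i‖ ^ 2 = 1 := by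
        intro l
        rw [← normE]
        have hl : ‖(b l : (EuclideanSpace ℂ (Fin n1)))‖ = ‖b l‖ := rfl
        rw [hl, b.orthonormal.1 l, one_pow]
      rw [Finset.sum_congr rfl fun l _ => hb l, Finset.sum_const, Finset.card_univ,
        Fintype.card_fin, nsmul_eq_mul, mul_one]
    rw [hsum]
    exact_mod_cast hrank
  -- columns
  let colv : Matrix (Fin n1) (Fin n2) ℂ → Fin n2 → (EuclideanSpace ℂ (Fin n1)) := fun M j => toE (fun i => M i j)
  have colv_apply : ∀ (M : Matrix (Fin n1) (Fin n2) ℂ) (j i), colv M j i = M i j :=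
    fun M j i => rfl
  have col_norm : ∀ M : Matrix (Fin n1) (Fin n2) ℂ, frobSq M = ∑ j, ‖colv M j‖ ^ 2 := by
    intro M
    rw [frobSq, Finset.sum_comm]
    exact Finset.sum_congr rfl fun j _ => (normE (colv M j)).symm
  have hXYmem : ∀ j, colv (X * Y) j ∈ K := by
    intro j
    exact ⟨fun l => Y l j, rfl⟩
  have hsub : ∀ j, colv (D - X * Y) j = colv D j - colv (X * Y) j := by
    intro j
    simp only [colv]
    rw [← map_sub]
    congr 1
  let c : Fin n2 → ℝ := fun j => if (j : ℕ) < n1 then σ (j : ℕ) ^ 2 else 0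
  let p : Fin n2 → ℝ := fun j => if h : (j : ℕ) < n1 then q ⟨(j : ℕ), h⟩ else 0
  have hcolD : ∀ j : Fin n2, colv D j
      = if h : (j : ℕ) < n1 then (σ (j : ℕ) : ℂ) • e ⟨(j : ℕ), h⟩ else 0 := by
    intro j
    split
    case isTrue h =>
      have he : e ⟨(j : ℕ), h⟩ = toE (Pi.single ⟨(j : ℕ), h⟩ 1) := rfl
      rw [he, ← map_smul]
      simp only [colv]
      congr 1
      funext i
      rw [hD i j, Pi.smul_apply, Pi.single_apply, smul_eq_mul]
      by_cases hij : (i : ℕ) = (j : ℕ)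
      · rw [if_pos hij, if_pos (by exact Fin.ext hij), mul_one, hij]
      · rw [if_neg hij, if_neg (by simp [Fin.ext_iff]; omega), mul_zero]
    case isFalse h =>
      have h0 : (0 : (EuclideanSpace ℂ (Fin n1))) = toE 0 := rfl
      rw [h0]
      simp only [colv]
      congr 1
      funext i
      rw [hD i j, if_neg (by omega)]
      rfl
  have key_col : ∀ j : Fin n2, c j * (1 - p j) ≤ ‖colv D j - colv (X * Y) j‖ ^ 2 := by
    intro j
    by_cases h : (j : ℕ) < n1
    · have hc : colv D j = (σ (j : ℕ) : ℂ) • e ⟨(j : ℕ), h⟩ := by rw [hcolD, dif_pos h]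
      have hn1 : ‖colv D j‖ ^ 2 = σ (j : ℕ) ^ 2 := by
        rw [hc, norm_smul]
        have he1 : ‖e ⟨(j : ℕ), h⟩‖ = 1 := by
          simp only [e]
          rw [EuclideanSpace.norm_single, norm_one]
        rw [he1, mul_one, Complex.norm_real, Real.norm_eq_abs, _root_.sq_abs]
      have hn2 : ‖(K.orthogonalProjectionOnto (colv D j) : (EuclideanSpace ℂ (Fin n1)))‖ ^ 2
          = σ (j : ℕ) ^ 2 * q ⟨(j : ℕ), h⟩ := by
        rw [hc, map_smul]
        have : ((((σ (j : ℕ) : ℂ)) • K.orthogonalProjectionOnto (e ⟨(j : ℕ), h⟩) : K) : (EuclideanSpace ℂ (Fin n1)))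
            = ((σ (j : ℕ) : ℂ)) • (K.orthogonalProjectionOnto (e ⟨(j : ℕ), h⟩) : (EuclideanSpace ℂ (Fin n1))) := rfl
        rw [this, norm_smul, mul_pow, Complex.norm_real, Real.norm_eq_abs, _root_.sq_abs]
      have h1 := dist_le (colv D j) (colv (X * Y) j) (hXYmem j)
      have h2 := pyth (colv D j)
      have hcj : c j = σ (j : ℕ) ^ 2 := if_pos h
      have hpj : p j = q ⟨(j : ℕ), h⟩ := dif_pos h
      rw [hcj, hpj]
      nlinarith [h1, h2, hn1, hn2]
    · have hcj : c j = 0 := if_neg h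
      rw [hcj, zero_mul]
      exact sq_nonneg _
  have hc0 : ∀ j, 0 ≤ c j := by
    intro j
    simp only [c]
    split
    · exact sq_nonneg _
    · exact le_refl 0
  have hcd : ∀ i j : Fin n2, (i : ℕ) ≤ (j : ℕ) → c j ≤ c i := by
    intro i j hij
    simp only [c]
    by_cases hj : (j : ℕ) < n1
    · rw [if_pos hj, if_pos (lt_of_le_of_lt hij hj)]
      have h5 := hσd (i : ℕ) (j : ℕ) hij
      have h0i := hσ0 (i : ℕ)
      have h0j := hσ0 (j : ℕ)
      nlinarith
    · rw [if_neg hj]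
      split
      · exact sq_nonneg _
      · exact le_refl 0
  have hp0 : ∀ j, 0 ≤ p j := by
    intro j
    simp only [p]
    split
    · exact q_nonneg _
    · exact le_refl 0
  have hp1 : ∀ j, p j ≤ 1 := by
    intro j
    simp only [p]
    split
    · exact q_le_one _
    · exact zero_le_one
  have hps : ∑ j, p j ≤ (r : ℝ) := by
    refine le_trans ?_ q_sum
    let Q : ℕ → ℝ := fun x => if h : x < n1 then q ⟨x, h⟩ else 0
    have hQ0 : ∀ x, 0 ≤ Q x := by
      intro x
      simp only [Q]
      split
      · exact q_nonneg _
      · exact le_refl 0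
    have h1 : ∑ j : Fin n2, p j = ∑ x ∈ Finset.range n2, Q x := by
      rw [← Fin.sum_univ_eq_sum_range Q n2]
    have h2 : ∑ i : Fin n1, q i = ∑ x ∈ Finset.range n1, Q x := by
      rw [← Fin.sum_univ_eq_sum_range Q n1]
      refine Finset.sum_congr rfl fun i _ => ?_
      simp only [Q]
      rw [dif_pos i.isLt]
    rw [h1, h2]
    rcases le_total n2 n1 with hn | hn
    · exact Finset.sum_le_sum_of_subset_of_nonneg
        (Finset.range_subset_range.2 hn) (fun x _ _ => hQ0 x)
    · refine le_of_eq (Finset.sum_subset (Finset.range_subset_range.2 hn) fun x _ hnx => ?_).symm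
      simp only [Finset.mem_range, not_lt] at hnx
      simp only [Q]
      exact dif_neg (not_lt.2 hnx)
  have hscal := sum_mul_le_head (r := r) c p hc0 hcd hp0 hp1 hps
  have e1 : ∑ j, c j * (1 - p j) = ∑ j, c j - ∑ j, c j * p j := by
    rw [← Finset.sum_sub_distrib]
    exact Finset.sum_congr rfl fun j _ => by ring
  have e2 : (∑ j : Fin n2, if r ≤ (j : ℕ) ∧ (j : ℕ) < n1 then σ (j : ℕ) ^ 2 else 0)
      = ∑ j, c j - ∑ j : Fin n2, (if (j : ℕ) < r then c j else 0) := by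
    rw [← Finset.sum_sub_distrib]
    refine Finset.sum_congr rfl fun j _ => ?_
    simp only [c]
    by_cases h1 : (j : ℕ) < r
    · rw [if_neg (by omega : ¬(r ≤ (j : ℕ) ∧ (j : ℕ) < n1)), if_pos h1]
      ring
    · by_cases h2 : (j : ℕ) < n1
      · rw [if_pos ⟨le_of_not_gt h1, h2⟩, if_neg h1, if_pos h2]
        ring
      · rw [if_neg (by tauto), if_neg h1, if_neg h2]
        ring
  have e3 : ∑ j, c j * (1 - p j) ≤ ∑ j, ‖colv D j - colv (X * Y) j‖ ^ 2 :=
    Finset.sum_le_sum fun j _ => key_col j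
  have e4 : frobSq (D - X * Y) = ∑ j, ‖colv D j - colv (X * Y) j‖ ^ 2 := by
    rw [col_norm]
    exact Finset.sum_congr rfl fun j _ => by rw [hsub]
  rw [e2, e4]
  linarith [hscal, e3, e1]

lemma EY_lower {n1 n2 r : ℕ} (U : Matrix (Fin n1) (Fin n1) ℂ) (V : Matrix (Fin n2) (Fin n2) ℂ)
    (hU1 : Uᴴ * U = 1) (hU2 : U * Uᴴ = 1) (hV1 : Vᴴ * V = 1) (hV2 : V * Vᴴ = 1)
    (σ : ℕ → ℝ) (hσ0 : ∀ i, 0 ≤ σ i) (hσd : ∀ i j : ℕ, i ≤ j → σ j ≤ σ i)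
    (D : Matrix (Fin n1) (Fin n2) ℂ)
    (hD : ∀ i j, D i j = if (i : ℕ) = (j : ℕ) then (σ (i : ℕ) : ℂ) else 0)
    (X : Matrix (Fin n1) (Fin r) ℂ) (Y : Matrix (Fin r) (Fin n2) ℂ) :
    (∑ j : Fin n2, if r ≤ (j : ℕ) ∧ (j : ℕ) < n1 then σ (j : ℕ) ^ 2 else 0)
      ≤ frobSq (U * D * Vᴴ - X * Y) := by
  have key : Uᴴ * (U * D * Vᴴ - X * Y) * V = D - (Uᴴ * X) * (Y * V) := by
    rw [Matrix.mul_sub, Matrix.sub_mul]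
    congr 1
    · calc Uᴴ * (U * D * Vᴴ) * V = (Uᴴ * U) * D * (Vᴴ * V) := by
            simp only [Matrix.mul_assoc]
        _ = D := by rw [hU1, hV1, Matrix.one_mul, Matrix.mul_one]
    · simp only [Matrix.mul_assoc]
  calc (∑ j : Fin n2, if r ≤ (j : ℕ) ∧ (j : ℕ) < n1 then σ (j : ℕ) ^ 2 else 0)
      ≤ frobSq (D - (Uᴴ * X) * (Y * V)) := EY_core σ hσ0 hσd D hD _ _
    _ = frobSq (Uᴴ * (U * D * Vᴴ - X * Y) * V) := by rw [key]
    _ = frobSq (U * D * Vᴴ - X * Y) :=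
        frobSq_mul_unitary Uᴴ _ V
          (by rw [Matrix.conjTranspose_conjTranspose]; exact hU2) hV2

lemma EY_trunc_eq {n1 n2 r : ℕ} (U : Matrix (Fin n1) (Fin n1) ℂ)
    (V : Matrix (Fin n2) (Fin n2) ℂ)
    (hU1 : Uᴴ * U = 1) (hV1 : Vᴴ * V = 1)
    (σ : ℕ → ℝ) (hσ0 : ∀ i, 0 ≤ σ i)
    (D Dr : Matrix (Fin n1) (Fin n2) ℂ)
    (hD : ∀ i j, D i j = if (i : ℕ) = (j : ℕ) then (σ (i : ℕ) : ℂ) else 0)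
    (hDr : ∀ i j, Dr i j = if (i : ℕ) = (j : ℕ) ∧ (i : ℕ) < r then (σ (i : ℕ) : ℂ) else 0) :
    frobSq (U * D * Vᴴ - U * Dr * Vᴴ)
      = ∑ j : Fin n2, if r ≤ (j : ℕ) ∧ (j : ℕ) < n1 then σ (j : ℕ) ^ 2 else 0 := by
  have h1 : U * D * Vᴴ - U * Dr * Vᴴ = U * (D - Dr) * Vᴴ := by
    rw [Matrix.mul_sub, Matrix.sub_mul]
  rw [h1, frobSq_mul_unitary U _ Vᴴ hU1
    (by rw [Matrix.conjTranspose_conjTranspose]; exact hV1)]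
  rw [frobSq, Finset.sum_comm]
  refine Finset.sum_congr rfl fun j _ => ?_
  by_cases hj : (j : ℕ) < n1
  · have hone : ∑ i : Fin n1, ‖(D - Dr) i j‖ ^ 2 = ‖(D - Dr) ⟨(j : ℕ), hj⟩ j‖ ^ 2 := by
      refine Finset.sum_eq_single_of_mem _ (Finset.mem_univ _) fun i _ hi => ?_
      rw [Matrix.sub_apply, hD, hDr]
      have hij : (i : ℕ) ≠ (j : ℕ) := fun hh => hi (Fin.ext hh)
      rw [if_neg hij, if_neg fun hh => hij hh.1]
      simp
    rw [hone, Matrix.sub_apply, hD, hDr]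
    have hcoe : ((⟨(j : ℕ), hj⟩ : Fin n1) : ℕ) = (j : ℕ) := rfl
    rw [if_pos hcoe]
    by_cases hr : (j : ℕ) < r
    · rw [if_pos ⟨hcoe, (by omega : ((⟨(j : ℕ), hj⟩ : Fin n1) : ℕ) < r)⟩,
        if_neg (by omega : ¬(r ≤ (j : ℕ) ∧ (j : ℕ) < n1)), sub_self, norm_zero]
      norm_num
    · rw [if_neg (fun hh => hr (by simpa using hh.2)),
        if_pos ⟨by omega, hj⟩, sub_zero, Complex.norm_real, Real.norm_eq_abs,
        _root_.sq_abs]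
  · rw [if_neg (by omega : ¬(r ≤ (j : ℕ) ∧ (j : ℕ) < n1))]
    refine Finset.sum_eq_zero fun i _ => ?_
    rw [Matrix.sub_apply, hD, hDr]
    have hi := i.isLt
    have hij : (i : ℕ) ≠ (j : ℕ) := by omega
    rw [if_neg hij, if_neg fun hh => hij hh.1]
    simp

/-! ### Tensor slices -/

noncomputable def tslice {m p N3 : ℕ} [NeZero N3] (A : Fin m → Fin p → ZMod N3 → ℂ)
    (k : ZMod N3) : Matrix (Fin m) (Fin p) ℂ :=
  Matrix.of fun i j => ZMod.dft (A i j) k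

variable {N3 : ℕ} [NeZero N3]

lemma tslice_tProduct {m p u : ℕ} (A : Fin m → Fin p → ZMod N3 → ℂ)
    (B : Fin p → Fin u → ZMod N3 → ℂ) (k : ZMod N3) :
    tslice (tProduct A B) k = tslice A k * tslice B k := by
  ext i j
  rw [Matrix.mul_apply]
  show ZMod.dft (∑ l : Fin p, cconv (A i l) (B l j)) k = _
  rw [map_sum, Finset.sum_apply]
  exact Finset.sum_congr rfl fun l _ => dft_conv _ _ _

lemma tslice_tConjTranspose {m p : ℕ} (A : Fin m → Fin p → ZMod N3 → ℂ) (k : ZMod N3) :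
    tslice (tConjTranspose A) k = (tslice A k)ᴴ := by
  ext i j
  rw [Matrix.conjTranspose_apply]
  exact dft_conjrev _ _

lemma tslice_tId (N : ℕ) (k : ZMod N3) : tslice (tId N N3) k = 1 := by
  ext i j
  by_cases hij : i = j
  · subst hij
    rw [Matrix.one_apply_eq]
    show ZMod.dft (fun t => if i = i ∧ t = 0 then (1 : ℂ) else 0) k = 1
    simp only [true_and, eq_self_iff_true]
    exact dft_delta k
  · rw [Matrix.one_apply_ne hij]
    show ZMod.dft (fun t => if i = j ∧ t = 0 then (1 : ℂ) else 0) k = 0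
    have h0 : (fun t : ZMod N3 => if i = j ∧ t = 0 then (1 : ℂ) else 0) = 0 := by
      funext t
      simp [hij]
    rw [h0, map_zero]
    rfl

lemma tslice_sub {m p : ℕ} (A B : Fin m → Fin p → ZMod N3 → ℂ) (k : ZMod N3) :
    tslice (A - B) k = tslice A k - tslice B k := by
  ext i j
  show ZMod.dft ((A - B) i j) k = ZMod.dft (A i j) k - ZMod.dft (B i j) k
  have h0 : (A - B) i j = A i j - B i j := rfl
  rw [h0, map_sub]
  rfl

lemma tensor_parseval {m p : ℕ} (A : Fin m → Fin p → ZMod N3 → ℂ) :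
    ∑ k : ZMod N3, frobSq (tslice A k)
      = (N3 : ℝ) * ∑ i, ∑ j, ∑ t, ‖A i j t‖ ^ 2 := by
  calc ∑ k : ZMod N3, frobSq (tslice A k)
      = ∑ k : ZMod N3, ∑ i, ∑ j, ‖ZMod.dft (A i j) k‖ ^ 2 := rfl
    _ = ∑ i, ∑ k : ZMod N3, ∑ j, ‖ZMod.dft (A i j) k‖ ^ 2 := Finset.sum_comm
    _ = ∑ i, ∑ j, ∑ k : ZMod N3, ‖ZMod.dft (A i j) k‖ ^ 2 :=
        Finset.sum_congr rfl fun i _ => Finset.sum_comm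
    _ = ∑ i, ∑ j, (N3 : ℝ) * ∑ t, ‖A i j t‖ ^ 2 :=
        Finset.sum_congr rfl fun i _ => Finset.sum_congr rfl fun j _ => dft_parseval _
    _ = (N3 : ℝ) * ∑ i, ∑ j, ∑ t, ‖A i j t‖ ^ 2 := by
        rw [Finset.mul_sum]
        exact Finset.sum_congr rfl fun i _ => (Finset.mul_sum _ _ _).symm

lemma sum_extend {N r : ℕ} (hr : r ≤ N) (F : Fin r → ℂ) :
    ∑ l : Fin N, (if h : (l : ℕ) < r then F ⟨(l : ℕ), h⟩ else 0) = ∑ i : Fin r, F i := by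
  have h1 : ∑ i : Fin r, F i
      = ∑ i : Fin r, (fun x : ℕ => if h : x < r then F ⟨x, h⟩ else 0) (i : ℕ) := by
    refine Finset.sum_congr rfl fun i _ => ?_
    simp only [dif_pos i.isLt]
  rw [h1, Fin.sum_univ_eq_sum_range (fun x => if h : x < r then F ⟨x, h⟩ else 0) r,
    Fin.sum_univ_eq_sum_range (fun x => if h : x < r then F ⟨x, h⟩ else 0) N]
  refine (Finset.sum_subset (Finset.range_subset_range.2 hr) fun x _ hx => ?_).symm
  simp only [Finset.mem_range, not_lt] at hx
  exact dif_neg (not_lt.2 hx)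

end TSVD

open TSVD Matrix in
/-- the truncated t-SVD is a best tubal-rank-`r` approximation in
Frobenius norm. -/
theorem stmt4 (N1 N2 N3 r : ℕ) [NeZero N3] (hr : r ≤ min N1 N2)
    (T : Fin N1 → Fin N2 → ZMod N3 → ℂ)
    (U : Fin N1 → Fin N1 → ZMod N3 → ℂ)
    (Θ : Fin N1 → Fin N2 → ZMod N3 → ℂ)
    (V : Fin N2 → Fin N2 → ZMod N3 → ℂ)
    (hU1 : tProduct (tConjTranspose U) U = tId N1 N3)
    (hU2 : tProduct U (tConjTranspose U) = tId N1 N3)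
    (hV1 : tProduct (tConjTranspose V) V = tId N2 N3)
    (hV2 : tProduct V (tConjTranspose V) = tId N2 N3)
    (hΘdiag : ∀ (i : Fin N1) (j : Fin N2), (i : ℕ) ≠ (j : ℕ) → Θ i j = 0)
    (hT : T = tProduct U (tProduct Θ (tConjTranspose V)))
    (hpos : ∀ (k : ZMod N3) (i : Fin N1) (j : Fin N2), (i : ℕ) = (j : ℕ) →
      (dft (Θ i j) k).im = 0 ∧ 0 ≤ (dft (Θ i j) k).re)
    (hdec : ∀ (k : ZMod N3) (i i' : Fin N1) (j j' : Fin N2),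
      (i : ℕ) = (j : ℕ) → (i' : ℕ) = (j' : ℕ) → (i : ℕ) ≤ (i' : ℕ) →
      (dft (Θ i' j') k).re ≤ (dft (Θ i j) k).re) :
    frobNorm (T - fun a b => ∑ i : Fin r,
        cconv (U a (Fin.castLE (hr.trans (min_le_left N1 N2)) i))
          (cconv (Θ (Fin.castLE (hr.trans (min_le_left N1 N2)) i)
                    (Fin.castLE (hr.trans (min_le_right N1 N2)) i))
            (tConjTranspose V (Fin.castLE (hr.trans (min_le_right N1 N2)) i) b))) =
      sInf { e : ℝ | ∃ (X : Fin N1 → Fin r → ZMod N3 → ℂ)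
          (Y : Fin r → Fin N2 → ZMod N3 → ℂ), e = frobNorm (T - tProduct X Y) } := by
  classical
  have hrL : r ≤ N1 := hr.trans (min_le_left N1 N2)
  have hrR : r ≤ N2 := hr.trans (min_le_right N1 N2)
  set castL : Fin r → Fin N1 := Fin.castLE (hr.trans (min_le_left N1 N2)) with hcastL
  set castR : Fin r → Fin N2 := Fin.castLE (hr.trans (min_le_right N1 N2)) with hcastR
  set X₀ : Fin N1 → Fin r → ZMod N3 → ℂ := fun a i => U a (castL i) with hX₀
  set Y₀ : Fin r → Fin N2 → ZMod N3 → ℂ := fun i b =>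
    cconv (Θ (castL i) (castR i)) (tConjTranspose V (castR i) b) with hY₀
  have hTr : (fun a b => ∑ i : Fin r, cconv (U a (castL i))
      (cconv (Θ (castL i) (castR i)) (tConjTranspose V (castR i) b)))
      = tProduct X₀ Y₀ := rfl
  rw [hTr]
  -- frequency-domain data
  set Uh : ZMod N3 → Matrix (Fin N1) (Fin N1) ℂ := fun k => tslice U k with hUh
  set Vh : ZMod N3 → Matrix (Fin N2) (Fin N2) ℂ := fun k => tslice V k with hVh
  set Dh : ZMod N3 → Matrix (Fin N1) (Fin N2) ℂ := fun k => tslice Θ k with hDh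
  have hU1' : ∀ k, (Uh k)ᴴ * Uh k = 1 := fun k => by
    have h := congrArg (fun A => tslice A k) hU1
    rwa [tslice_tProduct, tslice_tConjTranspose, tslice_tId] at h
  have hU2' : ∀ k, Uh k * (Uh k)ᴴ = 1 := fun k => by
    have h := congrArg (fun A => tslice A k) hU2
    rwa [tslice_tProduct, tslice_tConjTranspose, tslice_tId] at h
  have hV1' : ∀ k, (Vh k)ᴴ * Vh k = 1 := fun k => by
    have h := congrArg (fun A => tslice A k) hV1
    rwa [tslice_tProduct, tslice_tConjTranspose, tslice_tId] at h
  have hV2' : ∀ k, Vh k * (Vh k)ᴴ = 1 := fun k => by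
    have h := congrArg (fun A => tslice A k) hV2
    rwa [tslice_tProduct, tslice_tConjTranspose, tslice_tId] at h
  set σk : ZMod N3 → ℕ → ℝ := fun k i =>
    if h : i < N1 ∧ i < N2 then (ZMod.dft (Θ ⟨i, h.1⟩ ⟨i, h.2⟩) k).re else 0 with hσk
  have hpos' : ∀ (k : ZMod N3) (i : Fin N1) (j : Fin N2), (i : ℕ) = (j : ℕ) →
      (ZMod.dft (Θ i j) k).im = 0 ∧ 0 ≤ (ZMod.dft (Θ i j) k).re := by
    intro k i j hij
    have h := hpos k i j hij
    rwa [dft_eq] at h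
  have hdec' : ∀ (k : ZMod N3) (i i' : Fin N1) (j j' : Fin N2),
      (i : ℕ) = (j : ℕ) → (i' : ℕ) = (j' : ℕ) → (i : ℕ) ≤ (i' : ℕ) →
      (ZMod.dft (Θ i' j') k).re ≤ (ZMod.dft (Θ i j) k).re := by
    intro k i i' j j' h1 h2 h3
    have h := hdec k i i' j j' h1 h2 h3
    rwa [dft_eq, dft_eq] at h
  have hσ0 : ∀ k i, 0 ≤ σk k i := by
    intro k i
    simp only [hσk]
    split
    case isTrue h => exact (hpos' k ⟨i, h.1⟩ ⟨i, h.2⟩ rfl).2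
    case isFalse => exact le_refl 0
  have hσd : ∀ k, ∀ i j : ℕ, i ≤ j → σk k j ≤ σk k i := by
    intro k i j hij
    by_cases hj : j < N1 ∧ j < N2
    · have hi : i < N1 ∧ i < N2 := ⟨lt_of_le_of_lt hij hj.1, lt_of_le_of_lt hij hj.2⟩
      simp only [hσk, dif_pos hj, dif_pos hi]
      exact hdec' k ⟨i, hi.1⟩ ⟨j, hj.1⟩ ⟨i, hi.2⟩ ⟨j, hj.2⟩ rfl rfl hij
    · have h0 : σk k j = 0 := by simp only [hσk, dif_neg hj]
      rw [h0]
      exact hσ0 k i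
  have hD : ∀ k, ∀ (i : Fin N1) (j : Fin N2), Dh k i j
      = if (i : ℕ) = (j : ℕ) then (σk k (i : ℕ) : ℂ) else 0 := by
    intro k i j
    by_cases hij : (i : ℕ) = (j : ℕ)
    · rw [if_pos hij]
      have hin : (i : ℕ) < N1 ∧ (i : ℕ) < N2 := ⟨i.isLt, hij ▸ j.isLt⟩
      have hii : (⟨(i : ℕ), hin.1⟩ : Fin N1) = i := rfl
      have hjj : (⟨(i : ℕ), hin.2⟩ : Fin N2) = j := Fin.ext hij
      have hval := hpos' k i j hij
      have hs : σk k (i : ℕ) = (ZMod.dft (Θ i j) k).re := by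
        simp only [hσk, dif_pos hin, hii, hjj]
      rw [hs]
      show ZMod.dft (Θ i j) k = (((ZMod.dft (Θ i j) k).re : ℝ) : ℂ)
      apply Complex.ext
      · simp
      · simp [hval.1]
    · rw [if_neg hij]
      show ZMod.dft (Θ i j) k = 0
      rw [hΘdiag i j hij, map_zero]
      rfl
  have hTs : ∀ k, tslice T k = Uh k * Dh k * (Vh k)ᴴ := by
    intro k
    rw [hT, tslice_tProduct, tslice_tProduct, tslice_tConjTranspose, ← Matrix.mul_assoc]
  set Dr : ZMod N3 → Matrix (Fin N1) (Fin N2) ℂ := fun k =>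
    Matrix.of fun i j =>
      if (i : ℕ) = (j : ℕ) ∧ (i : ℕ) < r then (σk k (i : ℕ) : ℂ) else 0 with hDr
  have hTrs : ∀ k, tslice (tProduct X₀ Y₀) k = Uh k * Dr k * (Vh k)ᴴ := by
    intro k
    rw [Matrix.mul_assoc]
    ext a b
    rw [Matrix.mul_apply]
    have hL : tslice (tProduct X₀ Y₀) k a b
        = ∑ i : Fin r, ZMod.dft (X₀ a i) k * (ZMod.dft (Θ (castL i) (castR i)) k
            * ZMod.dft (tConjTranspose V (castR i) b) k) := by
      show ZMod.dft (∑ i : Fin r, cconv (X₀ a i) (Y₀ i b)) k = _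
      rw [map_sum, Finset.sum_apply]
      refine Finset.sum_congr rfl fun i _ => ?_
      rw [show Y₀ i b = cconv (Θ (castL i) (castR i)) (tConjTranspose V (castR i) b) from rfl]
      rw [dft_conv]
      congr 1
      exact dft_conv _ _ _
    rw [hL]
    have hInner : ∀ l : Fin N1, (Dr k * (Vh k)ᴴ) l b
        = if h : (l : ℕ) < r then (σk k (l : ℕ) : ℂ)
            * ZMod.dft (tConjTranspose V (castR ⟨(l : ℕ), h⟩) b) k else 0 := by
      intro l
      rw [Matrix.mul_apply]
      by_cases h : (l : ℕ) < r
      · rw [dif_pos h]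
        have hlt2 : (l : ℕ) < N2 := lt_of_lt_of_le h hrR
        refine (Finset.sum_eq_single_of_mem (⟨(l : ℕ), hlt2⟩ : Fin N2) (Finset.mem_univ _)
          (fun j _ hj => ?_)).trans ?_
        · have hne : ¬((l : ℕ) = (j : ℕ) ∧ (l : ℕ) < r) := by
            rintro ⟨h1, _⟩
            exact hj (Fin.ext h1.symm)
          show (if (l : ℕ) = (j : ℕ) ∧ (l : ℕ) < r then (σk k (l : ℕ) : ℂ) else 0)
              * (Vh k)ᴴ j b = 0
          rw [if_neg hne, zero_mul]
        · show (if (l : ℕ) = ((⟨(l : ℕ), hlt2⟩ : Fin N2) : ℕ) ∧ (l : ℕ) < r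
              then (σk k (l : ℕ) : ℂ) else 0) * (Vh k)ᴴ (⟨(l : ℕ), hlt2⟩ : Fin N2) b = _
          rw [if_pos ⟨rfl, h⟩]
          congr 1
          rw [← tslice_tConjTranspose]
          rfl
      · rw [dif_neg h]
        refine Finset.sum_eq_zero fun j _ => ?_
        show (if (l : ℕ) = (j : ℕ) ∧ (l : ℕ) < r then (σk k (l : ℕ) : ℂ) else 0)
            * (Vh k)ᴴ j b = 0
        rw [if_neg (fun hh => h hh.2), zero_mul]
    have step : ∀ l : Fin N1, Uh k a l * (Dr k * (Vh k)ᴴ) l b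
        = (if h : (l : ℕ) < r then
            ZMod.dft (X₀ a ⟨(l : ℕ), h⟩) k
              * (ZMod.dft (Θ (castL ⟨(l : ℕ), h⟩) (castR ⟨(l : ℕ), h⟩)) k
                * ZMod.dft (tConjTranspose V (castR ⟨(l : ℕ), h⟩) b) k) else 0) := by
      intro l
      rw [hInner l]
      by_cases h : (l : ℕ) < r
      · rw [dif_pos h, dif_pos h]
        have hΘval : ZMod.dft (Θ (castL ⟨(l : ℕ), h⟩) (castR ⟨(l : ℕ), h⟩)) k
            = (σk k (l : ℕ) : ℂ) := by
          have hh := hD k (castL ⟨(l : ℕ), h⟩) (castR ⟨(l : ℕ), h⟩)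
          rw [if_pos (show ((castL ⟨(l : ℕ), h⟩ : Fin N1) : ℕ)
            = ((castR ⟨(l : ℕ), h⟩ : Fin N2) : ℕ) from rfl)] at hh
          exact hh
        rw [hΘval]
        rfl
      · rw [dif_neg h, dif_neg h, mul_zero]
    calc ∑ i : Fin r, ZMod.dft (X₀ a i) k * (ZMod.dft (Θ (castL i) (castR i)) k
            * ZMod.dft (tConjTranspose V (castR i) b) k)
        = ∑ l : Fin N1, (if h : (l : ℕ) < r then
            ZMod.dft (X₀ a ⟨(l : ℕ), h⟩) k
              * (ZMod.dft (Θ (castL ⟨(l : ℕ), h⟩) (castR ⟨(l : ℕ), h⟩)) k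
                * ZMod.dft (tConjTranspose V (castR ⟨(l : ℕ), h⟩) b) k) else 0) :=
          (sum_extend hrL _).symm
      _ = ∑ l : Fin N1, Uh k a l * (Dr k * (Vh k)ᴴ) l b :=
          Finset.sum_congr rfl fun l _ => (step l).symm
  have sqbound : ∀ (X : Fin N1 → Fin r → ZMod N3 → ℂ)
      (Y : Fin r → Fin N2 → ZMod N3 → ℂ),
      (∑ i, ∑ j, ∑ t, ‖(T - tProduct X₀ Y₀) i j t‖ ^ 2)
        ≤ ∑ i, ∑ j, ∑ t, ‖(T - tProduct X Y) i j t‖ ^ 2 := by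
    intro X Y
    have hN3 : (0 : ℝ) < (N3 : ℝ) := by
      exact_mod_cast Nat.pos_of_ne_zero (NeZero.ne N3)
    rw [← mul_le_mul_iff_right₀ hN3, ← tensor_parseval, ← tensor_parseval]
    refine Finset.sum_le_sum fun k _ => ?_
    rw [tslice_sub, tslice_sub, hTs k, hTrs k, tslice_tProduct]
    rw [EY_trunc_eq (Uh k) (Vh k) (hU1' k) (hV1' k) (σk k) (hσ0 k) (Dh k) (Dr k)
      (hD k) (fun i j => rfl)]
    exact EY_lower (Uh k) (Vh k) (hU1' k) (hU2' k) (hV1' k) (hV2' k) (σk k)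
      (hσ0 k) (hσd k) (Dh k) (hD k) (tslice X k) (tslice Y k)
  have hmem : frobNorm (T - tProduct X₀ Y₀)
      ∈ { e : ℝ | ∃ (X : Fin N1 → Fin r → ZMod N3 → ℂ)
          (Y : Fin r → Fin N2 → ZMod N3 → ℂ), e = frobNorm (T - tProduct X Y) } :=
    ⟨X₀, Y₀, rfl⟩
  have hlb : ∀ e ∈ { e : ℝ | ∃ (X : Fin N1 → Fin r → ZMod N3 → ℂ)
      (Y : Fin r → Fin N2 → ZMod N3 → ℂ), e = frobNorm (T - tProduct X Y) },
      frobNorm (T - tProduct X₀ Y₀) ≤ e := by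
    rintro e ⟨X, Y, rfl⟩
    exact Real.sqrt_le_sqrt (sqbound X Y)
  have hbdd : BddBelow { e : ℝ | ∃ (X : Fin N1 → Fin r → ZMod N3 → ℂ)
      (Y : Fin r → Fin N2 → ZMod N3 → ℂ), e = frobNorm (T - tProduct X Y) } := by
    refine ⟨0, ?_⟩
    rintro e ⟨X, Y, rfl⟩
    exact Real.sqrt_nonneg _
  exact le_antisymm (le_csInf ⟨_, hmem⟩ hlb) (csInf_le hbdd hmem)
end

section
/- (Second-moment bound for importance sampling of tube-weighted columns, used in the proof of Lemma 5.1.) Let E be a nonzero third-order tensor of size N1 × N2 × N3 with entries in ℂ, with column norms ‖E_j‖² = ∑_{i,t} |E(i,j)(t)|² and ‖E‖_F² = ∑_j ‖E_j‖². Let v : Fin N2 → (ZMod N3 → ℂ) be a family of tubes satisfying ∑_{j} max_{k} |(dft v(j))(k)|² ≤ ξ0. Let p : Fin N2 → ℝ satisfy p(j) > 0 and p(j) ≥ θ·‖E_j‖²/‖E‖_F² for all j, for some θ > 0. Then ∑_{j} (1/p(j)) · ∑_{i} ∑_{t} |(E(i,j) ⋆ v(j))(t)|² ≤ (ξ0/θ)·‖E‖_F².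 -/
open scoped BigOperators

namespace Aux12

open Complex Finset
set_option linter.unusedSectionVars false

variable (n : ℕ) [NeZero n]

noncomputable def ζ : ℂ := Complex.exp (-2 * (Real.pi : ℂ) * Complex.I / n)

lemma hn0 : (n : ℂ) ≠ 0 := Nat.cast_ne_zero.2 (NeZero.ne n)

lemma zeta_eq_inv : ζ n = (Complex.exp (2 * Real.pi * Complex.I / n))⁻¹ := by
  rw [ζ, ← Complex.exp_neg]
  ring_nf

lemma zeta_prim : IsPrimitiveRoot (ζ n) n := by
  rw [zeta_eq_inv]
  exact (Complex.isPrimitiveRoot_exp n (NeZero.ne n)).inv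

lemma zeta_pow_n : ζ n ^ n = 1 := (zeta_prim n).pow_eq_one

lemma zeta_pow_mod (m : ℕ) : ζ n ^ (m % n) = ζ n ^ m := by
  conv_rhs => rw [← Nat.mod_add_div m n, pow_add, pow_mul, zeta_pow_n, one_pow, mul_one]

noncomputable def e (x : ZMod n) : ℂ := ζ n ^ x.val

lemma e_add (x y : ZMod n) : e n (x + y) = e n x * e n y := by
  rw [e, e, e, ZMod.val_add, zeta_pow_mod, pow_add]

lemma e_zero : e n 0 = 1 := by
  rw [e, ZMod.val_zero, pow_zero]

lemma e_mul_val (k t : ZMod n) : e n (k * t) = ζ n ^ (k.val * t.val) := by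
  rw [e, ZMod.val_mul, zeta_pow_mod]

lemma norm_zeta : ‖ζ n‖ = 1 := by
  have : ζ n = Complex.exp (((-2 * Real.pi / n : ℝ) : ℂ) * Complex.I) := by
    rw [ζ]; push_cast; ring_nf
  rw [this, Complex.norm_exp_ofReal_mul_I]

lemma norm_e (x : ZMod n) : ‖e n x‖ = 1 := by
  rw [e, norm_pow, norm_zeta, one_pow]

lemma conj_e (x : ZMod n) : (starRingEnd ℂ) (e n x) = e n (-x) := by
  have h1 : e n x * e n (-x) = 1 := by rw [← e_add, add_neg_cancel, e_zero]
  have h2 : e n x * (starRingEnd ℂ) (e n x) = 1 := by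
    rw [Complex.mul_conj, Complex.normSq_eq_norm_sq, norm_e]
    norm_num
  have hx : e n x ≠ 0 := by
    intro h; rw [h, zero_mul] at h1; exact one_ne_zero h1.symm
  exact mul_left_cancel₀ hx (h2.trans h1.symm)

lemma e_ne_one {k : ZMod n} (hk : k ≠ 0) : e n k ≠ 1 := by
  rw [e]
  exact (zeta_prim n).pow_ne_one_of_pos_of_lt (ZMod.val_pos.2 hk).ne' (ZMod.val_lt k)

lemma sum_e (k : ZMod n) : ∑ t : ZMod n, e n (k * t) = if k = 0 then (n : ℂ) else 0 := by
  rcases eq_or_ne k 0 with rfl | hk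
  · simp [e_zero, ZMod.card]
  · rw [if_neg hk]
    set S := ∑ t : ZMod n, e n (k * t) with hS
    have h : S * e n k = S := by
      rw [Finset.sum_mul]
      refine Fintype.sum_bijective (· + (1 : ZMod n)) (Equiv.addRight (1 : ZMod n)).bijective _ _
        fun t => ?_
      rw [mul_add, mul_one, e_add]
    have h' : S * (e n k - 1) = 0 := by rw [mul_sub, h, mul_one, sub_self]
    rcases mul_eq_zero.mp h' with h'' | h''
    · exact h''
    · exact absurd (sub_eq_zero.mp h'') (e_ne_one n hk)


lemma dft_eq (a : ZMod n → ℂ) (k : ZMod n) : dft a k = ∑ t : ZMod n, a t * e n (k * t) := by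
  unfold dft
  refine Finset.sum_congr rfl fun t _ => ?_
  rw [e_mul_val, ζ, ← Complex.exp_nat_mul]
  congr 1
  push_cast
  ring

lemma dft_cconv (a b : ZMod n → ℂ) (k : ZMod n) :
    dft (cconv a b) k = dft a k * dft b k := by
  rw [dft_eq, dft_eq, dft_eq]
  unfold cconv
  calc ∑ t : ZMod n, (∑ s : ZMod n, a s * b (t - s)) * e n (k * t)
      = ∑ t : ZMod n, ∑ s : ZMod n, a s * b (t - s) * e n (k * t) := by
        simp [Finset.sum_mul]
    _ = ∑ s : ZMod n, ∑ t : ZMod n, a s * b (t - s) * e n (k * t) := Finset.sum_comm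
    _ = ∑ s : ZMod n, ∑ u : ZMod n, (a s * e n (k * s)) * (b u * e n (k * u)) := by
        refine Finset.sum_congr rfl fun s _ => ?_
        refine (Fintype.sum_bijective (· + s) (Equiv.addRight s).bijective _ _ fun u => ?_).symm
        show a s * e n (k * s) * (b u * e n (k * u)) = a s * b (u + s - s) * e n (k * (u + s))
        rw [add_sub_cancel_right, mul_add, e_add]
        ring
    _ = (∑ t : ZMod n, a t * e n (k * t)) * ∑ t : ZMod n, b t * e n (k * t) := by
        rw [Finset.sum_mul_sum]

lemma plancherel (a : ZMod n → ℂ) :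
    ∑ k : ZMod n, ‖dft a k‖ ^ 2 = n * ∑ t : ZMod n, ‖a t‖ ^ 2 := by
  have key : ∑ k : ZMod n, dft a k * (starRingEnd ℂ) (dft a k)
      = (n : ℂ) * ∑ t : ZMod n, a t * (starRingEnd ℂ) (a t) := by
    calc ∑ k : ZMod n, dft a k * (starRingEnd ℂ) (dft a k)
        = ∑ k : ZMod n, ∑ t : ZMod n, ∑ s : ZMod n,
            a t * (starRingEnd ℂ) (a s) * e n ((t - s) * k) := by
          refine Finset.sum_congr rfl fun k _ => ?_
          rw [dft_eq, map_sum, Finset.sum_mul_sum]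
          refine Finset.sum_congr rfl fun t _ => Finset.sum_congr rfl fun s _ => ?_
          rw [map_mul, conj_e]
          have : e n ((t - s) * k) = e n (k * t) * e n (-(k * s)) := by
            rw [← e_add]; congr 1; ring
          rw [this]; ring
      _ = ∑ t : ZMod n, ∑ s : ZMod n,
            a t * (starRingEnd ℂ) (a s) * ∑ k : ZMod n, e n ((t - s) * k) := by
          rw [Finset.sum_comm]
          refine Finset.sum_congr rfl fun t _ => ?_
          rw [Finset.sum_comm]
          refine Finset.sum_congr rfl fun s _ => ?_
          rw [Finset.mul_sum]
      _ = (n : ℂ) * ∑ t : ZMod n, a t * (starRingEnd ℂ) (a t) := by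
          rw [Finset.mul_sum]
          refine Finset.sum_congr rfl fun t _ => ?_
          rw [Finset.sum_eq_single t]
          · rw [sum_e, if_pos (sub_self t)]; ring
          · intro s _ hs
            rw [sum_e, if_neg (sub_ne_zero.mpr (Ne.symm hs)), mul_zero]
          · intro h; exact absurd (Finset.mem_univ t) h
  have cast : ∀ z : ℂ, z * (starRingEnd ℂ) z = ((‖z‖ ^ 2 : ℝ) : ℂ) := fun z => by
    rw [Complex.mul_conj, Complex.normSq_eq_norm_sq]
  simp only [cast] at key
  have : ((∑ k : ZMod n, ‖dft a k‖ ^ 2 : ℝ) : ℂ) = (((n : ℝ) * ∑ t : ZMod n, ‖a t‖ ^ 2 : ℝ) : ℂ) := by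
    push_cast
    push_cast at key
    exact key
  exact_mod_cast this

lemma conv_bound (a b : ZMod n → ℂ) (M : ℝ) (hM : ∀ k, ‖dft b k‖ ^ 2 ≤ M) :
    ∑ t : ZMod n, ‖cconv a b t‖ ^ 2 ≤ M * ∑ t : ZMod n, ‖a t‖ ^ 2 := by
  have hnpos : (0 : ℝ) < n := by exact_mod_cast Nat.pos_of_ne_zero (NeZero.ne n)
  rw [← mul_le_mul_iff_right₀ hnpos, ← plancherel]
  calc ∑ k : ZMod n, ‖dft (cconv a b) k‖ ^ 2
      = ∑ k : ZMod n, ‖dft a k‖ ^ 2 * ‖dft b k‖ ^ 2 := by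
        refine Finset.sum_congr rfl fun k _ => ?_
        rw [dft_cconv, norm_mul, mul_pow]
    _ ≤ ∑ k : ZMod n, ‖dft a k‖ ^ 2 * M := by
        refine Finset.sum_le_sum fun k _ => ?_
        exact mul_le_mul_of_nonneg_left (hM k) (sq_nonneg _)
    _ = M * ∑ k : ZMod n, ‖dft a k‖ ^ 2 := by rw [← Finset.sum_mul]; ring
    _ = M * ((n : ℝ) * ∑ t : ZMod n, ‖a t‖ ^ 2) := by rw [plancherel]
    _ = (n : ℝ) * (M * ∑ t : ZMod n, ‖a t‖ ^ 2) := by ring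

end Aux12

/-- second-moment bound for importance sampling of tube-weighted
columns of a third-order tensor. -/
theorem stmt12 (N1 N2 N3 : ℕ) [NeZero N3]
    (E : Fin N1 → Fin N2 → ZMod N3 → ℂ) (hE : E ≠ 0)
    (v : Fin N2 → ZMod N3 → ℂ) (ξ0 : ℝ)
    (hv : ∑ j : Fin N2,
        (Finset.univ.sup' Finset.univ_nonempty fun k : ZMod N3 => ‖dft (v j) k‖ ^ 2) ≤ ξ0)
    (p : Fin N2 → ℝ) (θ : ℝ) (hθ : 0 < θ)
    (hp0 : ∀ j, 0 < p j)
    (hp : ∀ j, θ * ((∑ i : Fin N1, ∑ t : ZMod N3, ‖E i j t‖ ^ 2) /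
        ∑ j' : Fin N2, ∑ i : Fin N1, ∑ t : ZMod N3, ‖E i j' t‖ ^ 2) ≤ p j) :
    ∑ j : Fin N2, (1 / p j) * ∑ i : Fin N1, ∑ t : ZMod N3, ‖cconv (E i j) (v j) t‖ ^ 2 ≤
      (ξ0 / θ) * ∑ j' : Fin N2, ∑ i : Fin N1, ∑ t : ZMod N3, ‖E i j' t‖ ^ 2 := by
  classical
  set C : Fin N2 → ℝ := fun j => ∑ i : Fin N1, ∑ t : ZMod N3, ‖E i j t‖ ^ 2 with hC
  set F : ℝ := ∑ j' : Fin N2, C j' with hF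
  set m : Fin N2 → ℝ :=
    fun j => Finset.univ.sup' Finset.univ_nonempty fun k : ZMod N3 => ‖dft (v j) k‖ ^ 2 with hm
  have hCnn : ∀ j, 0 ≤ C j := fun j =>
    Finset.sum_nonneg fun i _ => Finset.sum_nonneg fun t _ => sq_nonneg _
  have hFnn : 0 ≤ F := Finset.sum_nonneg fun j _ => hCnn j
  have hmnn : ∀ j, 0 ≤ m j := fun j =>
    le_trans (sq_nonneg ‖dft (v j) 0‖)
      (Finset.le_sup' (fun k : ZMod N3 => ‖dft (v j) k‖ ^ 2) (Finset.mem_univ (0 : ZMod N3)))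
  have hSnn : ∀ j, (0:ℝ) ≤ ∑ i : Fin N1, ∑ t : ZMod N3, ‖cconv (E i j) (v j) t‖ ^ 2 := fun j =>
    Finset.sum_nonneg fun i _ => Finset.sum_nonneg fun t _ => sq_nonneg _
  have hSle : ∀ j, (∑ i : Fin N1, ∑ t : ZMod N3, ‖cconv (E i j) (v j) t‖ ^ 2) ≤ m j * C j := by
    intro j
    have h1 : ∀ i : Fin N1, (∑ t : ZMod N3, ‖cconv (E i j) (v j) t‖ ^ 2)
        ≤ m j * ∑ t : ZMod N3, ‖E i j t‖ ^ 2 := fun i =>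
      Aux12.conv_bound N3 (E i j) (v j) (m j)
        (fun k => Finset.le_sup' (fun k : ZMod N3 => ‖dft (v j) k‖ ^ 2) (Finset.mem_univ k))
    calc (∑ i : Fin N1, ∑ t : ZMod N3, ‖cconv (E i j) (v j) t‖ ^ 2)
        ≤ ∑ i : Fin N1, m j * ∑ t : ZMod N3, ‖E i j t‖ ^ 2 :=
          Finset.sum_le_sum fun i _ => h1 i
      _ = m j * C j := by rw [hC, Finset.mul_sum]
  have key : ∀ j, (1 / p j) * (∑ i : Fin N1, ∑ t : ZMod N3, ‖cconv (E i j) (v j) t‖ ^ 2)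
      ≤ (m j / θ) * F := by
    intro j
    rcases eq_or_lt_of_le (hCnn j) with h0 | hpos
    · have hz : (∑ i : Fin N1, ∑ t : ZMod N3, ‖cconv (E i j) (v j) t‖ ^ 2) = 0 :=
        le_antisymm (le_trans (hSle j) (by rw [← h0, mul_zero])) (hSnn j)
      rw [hz, mul_zero]
      exact mul_nonneg (div_nonneg (hmnn j) hθ.le) hFnn
    · have hFpos : 0 < F := lt_of_lt_of_le hpos
        (Finset.single_le_sum (fun j' _ => hCnn j') (Finset.mem_univ j))
      have hlb : 0 < θ * (C j / F) := mul_pos hθ (div_pos hpos hFpos)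
      have hinv : 1 / p j ≤ 1 / (θ * (C j / F)) :=
        one_div_le_one_div_of_le hlb (hp j)
      have heq : 1 / (θ * (C j / F)) = F / (θ * C j) := by
        field_simp
      calc (1 / p j) * (∑ i : Fin N1, ∑ t : ZMod N3, ‖cconv (E i j) (v j) t‖ ^ 2)
          ≤ (1 / p j) * (m j * C j) :=
            mul_le_mul_of_nonneg_left (hSle j) (one_div_nonneg.mpr (hp0 j).le)
        _ ≤ (F / (θ * C j)) * (m j * C j) := by
            rw [← heq]
            exact mul_le_mul_of_nonneg_right hinv (mul_nonneg (hmnn j) (hCnn j))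
        _ = (m j / θ) * F := by
            field_simp
  calc ∑ j : Fin N2, (1 / p j) * ∑ i : Fin N1, ∑ t : ZMod N3, ‖cconv (E i j) (v j) t‖ ^ 2
      ≤ ∑ j : Fin N2, (m j / θ) * F := Finset.sum_le_sum fun j _ => key j
    _ = (∑ j : Fin N2, m j) / θ * F := by rw [Finset.sum_div, Finset.sum_mul]
    _ ≤ ξ0 / θ * F := by
        apply mul_le_mul_of_nonneg_right _ hFnn
        exact div_le_div_of_nonneg_right hv hθ.le
    _ = (ξ0 / θ) * ∑ j' : Fin N2, ∑ i : Fin N1, ∑ t : ZMod N3, ‖E i j' t‖ ^ 2 := rfl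
end

section
/- (Vector Bernstein inequality, Lemma 8.2 of the paper.) Let X_1, …, X_n be independent random vectors in EuclideanSpace ℝ (Fin d) with E[X_i] = 0 for every i, ‖X_i‖ ≤ R almost surely for every i, and ∑_{i=1}^n E[‖X_i‖²] ≤ V for some V > 0. Then for every t with 0 < t ≤ V/R, the probability that ‖∑_{i=1}^n X_i‖ ≥ sqrt(V) + t is at most exp(−t²/(4V)). -/
open scoped BigOperators
open MeasureTheory


lemma sqrt_sq_add_helper {q c a : ℝ} (hq : 0 ≤ q) (hc : 0 ≤ c) (ha : 0 ≤ a) :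
    Real.sqrt ((q + c) ^ 2 + a) ≤ Real.sqrt (q ^ 2 + a) + c := by
  have hs : q ≤ Real.sqrt (q ^ 2 + a) := by
    calc q = Real.sqrt (q ^ 2) := (Real.sqrt_sq hq).symm
    _ ≤ Real.sqrt (q ^ 2 + a) := Real.sqrt_le_sqrt (by linarith)
  have hsq : Real.sqrt (q ^ 2 + a) ^ 2 = q ^ 2 + a := Real.sq_sqrt (by positivity)
  have h1 : (q + c) ^ 2 + a ≤ (Real.sqrt (q ^ 2 + a) + c) ^ 2 := by
    nlinarith [Real.sqrt_nonneg (q ^ 2 + a)]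
  calc Real.sqrt ((q + c) ^ 2 + a) ≤ Real.sqrt ((Real.sqrt (q ^ 2 + a) + c) ^ 2) :=
        Real.sqrt_le_sqrt h1
    _ = _ := Real.sqrt_sq (by positivity)

lemma sqrt_norm_sq_add_le {F : Type*} [NormedAddCommGroup F] {a : ℝ} (ha : 0 ≤ a) (y z : F) :
    Real.sqrt (‖y‖ ^ 2 + a) ≤ Real.sqrt (‖z‖ ^ 2 + a) + ‖y - z‖ := by
  have h1 : ‖y‖ ≤ ‖z‖ + ‖y - z‖ := norm_le_norm_add_norm_sub' y z
  have h2 : ‖y‖ ^ 2 ≤ (‖z‖ + ‖y - z‖) ^ 2 := by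
    have := norm_nonneg y
    nlinarith
  calc Real.sqrt (‖y‖ ^ 2 + a) ≤ Real.sqrt ((‖z‖ + ‖y - z‖) ^ 2 + a) :=
        Real.sqrt_le_sqrt (by linarith)
    _ ≤ _ := sqrt_sq_add_helper (norm_nonneg _) (norm_nonneg _) ha

lemma abs_sqrt_norm_sq_sub {F : Type*} [NormedAddCommGroup F] {a : ℝ} (ha : 0 ≤ a) (s y : F) :
    |Real.sqrt (‖s + y‖ ^ 2 + a) - Real.sqrt (‖s‖ ^ 2 + a)| ≤ ‖y‖ := by
  rw [abs_le]
  constructor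
  · have := sqrt_norm_sq_add_le ha s (s + y)
    rw [show s - (s + y) = -y by abel, norm_neg] at this
    linarith
  · have := sqrt_norm_sq_add_le ha (s + y) s
    rw [show s + y - s = y by abel] at this
    linarith

/-- One-step bound for the vector Bernstein inequality. -/
lemma step_bound {d : ℕ} {Ω : Type*} [MeasurableSpace Ω] (μ : Measure Ω)
    [IsProbabilityMeasure μ] (Y : Ω → EuclideanSpace ℝ (Fin d)) (hY : Measurable Y)
    (hmean : ∫ ω, Y ω ∂μ = 0) (R lam a : ℝ) (hbd : ∀ᵐ ω ∂μ, ‖Y ω‖ ≤ R)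
    (hlam : 0 ≤ lam) (hlamR : lam * R ≤ 1) (ha : 0 ≤ a) (s : EuclideanSpace ℝ (Fin d)) :
    ∫ ω, Real.exp (lam * Real.sqrt (‖s + Y ω‖ ^ 2 + a)) ∂μ ≤
      Real.exp (lam * Real.sqrt (‖s‖ ^ 2 + a + ∫ ω, ‖Y ω‖ ^ 2 ∂μ) +
        lam ^ 2 * ∫ ω, ‖Y ω‖ ^ 2 ∂μ) := by
  have hR0 : 0 ≤ R := by
    obtain ⟨ω, hω⟩ := hbd.exists
    exact le_trans (norm_nonneg _) hω
  set σ2 : ℝ := ∫ ω, ‖Y ω‖ ^ 2 ∂μ with hσ2def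
  have hσ2 : 0 ≤ σ2 := integral_nonneg fun ω => by positivity
  set b : ℝ := Real.sqrt (‖s‖ ^ 2 + a) with hbdef
  have hb0 : 0 ≤ b := Real.sqrt_nonneg _
  have hbsq : b ^ 2 = ‖s‖ ^ 2 + a := Real.sq_sqrt (by positivity)
  set f : Ω → ℝ := fun ω => Real.sqrt (‖s + Y ω‖ ^ 2 + a) with hfdef
  have hfb : ∀ ω, |f ω - b| ≤ ‖Y ω‖ := fun ω => abs_sqrt_norm_sq_sub ha s (Y ω)
  have hf0 : ∀ ω, 0 ≤ f ω := fun ω => Real.sqrt_nonneg _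
  have hfm : Measurable f := by
    apply Measurable.sqrt
    exact ((measurable_const.add hY).norm.pow_const 2).add_const a
  have hYint : Integrable Y μ := ⟨hY.aestronglyMeasurable, HasFiniteIntegral.of_bounded hbd⟩
  have hbd2 : ∀ᵐ ω ∂μ, ‖(‖Y ω‖ ^ 2)‖ ≤ R ^ 2 := by
    filter_upwards [hbd] with ω hω
    rw [Real.norm_eq_abs, abs_of_nonneg (by positivity)]
    have := norm_nonneg (Y ω); nlinarith
  have hY2int : Integrable (fun ω => ‖Y ω‖ ^ 2) μ :=
    ⟨(hY.norm.pow_const 2).aestronglyMeasurable, HasFiniteIntegral.of_bounded hbd2⟩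
  have hfbnd : ∀ᵐ ω ∂μ, ‖f ω‖ ≤ b + R := by
    filter_upwards [hbd] with ω hω
    rw [Real.norm_eq_abs, abs_of_nonneg (hf0 ω)]
    have := abs_le.mp (hfb ω)
    linarith
  have hfint : Integrable f μ := ⟨hfm.aestronglyMeasurable, HasFiniteIntegral.of_bounded hfbnd⟩
  have hf2int : Integrable (fun ω => f ω ^ 2) μ := by
    refine ⟨(hfm.pow_const 2).aestronglyMeasurable, HasFiniteIntegral.of_bounded
      (C := (b + R) ^ 2) ?_⟩
    filter_upwards [hfbnd] with ω hω
    rw [Real.norm_eq_abs, abs_of_nonneg (by positivity)]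
    rw [Real.norm_eq_abs, abs_of_nonneg (hf0 ω)] at hω
    nlinarith [hf0 ω]
  -- second moment of f
  have hinner : Integrable (fun ω => 2 * (inner ℝ s (Y ω) : ℝ)) μ :=
    (hYint.const_inner s).const_mul 2
  have hinner0 : ∫ ω, (inner ℝ s (Y ω) : ℝ) ∂μ = 0 := by
    rw [integral_inner hYint s, hmean, inner_zero_right]
  have hf2eq : ∀ ω, f ω ^ 2 = (‖s‖ ^ 2 + a) + (2 * (inner ℝ s (Y ω) : ℝ) + ‖Y ω‖ ^ 2) := by
    intro ω
    rw [hfdef]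
    simp only
    rw [Real.sq_sqrt (by positivity), norm_add_sq_real]
    ring
  have hif2 : ∫ ω, f ω ^ 2 ∂μ = b ^ 2 + σ2 := by
    simp_rw [hf2eq]
    rw [integral_add (integrable_const _)
        (show Integrable (fun ω => 2 * (inner ℝ s (Y ω) : ℝ) + ‖Y ω‖ ^ 2) μ from
          hinner.add hY2int),
      integral_add hinner hY2int, integral_const_mul, hinner0, integral_const]
    simp [measure_univ, hbsq]
    rfl
  set m : ℝ := ∫ ω, f ω ∂μ with hmdef
  have hm0 : 0 ≤ m := integral_nonneg hf0
  have hvar : m ^ 2 ≤ ∫ ω, f ω ^ 2 ∂μ := by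
    have h := integral_nonneg (μ := μ) (f := fun ω => (f ω - m) ^ 2) fun ω => sq_nonneg _
    have hexp : ∫ ω, (f ω - m) ^ 2 ∂μ = (∫ ω, f ω ^ 2 ∂μ) - m ^ 2 := by
      have heq : ∀ ω, (f ω - m) ^ 2 = (f ω ^ 2 - 2 * m * f ω) + m ^ 2 := by intro ω; ring
      simp_rw [heq]
      rw [integral_add
        (show Integrable (fun ω => f ω ^ 2 - 2 * m * f ω) μ from
          hf2int.sub (hfint.const_mul (2 * m))) (integrable_const _),
        integral_sub hf2int (hfint.const_mul (2 * m)), integral_const_mul, integral_const]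
      simp [measure_univ]
      ring
    linarith
  have hEf : m ≤ Real.sqrt (b ^ 2 + σ2) := by
    rw [← hif2]
    calc m = Real.sqrt (m ^ 2) := (Real.sqrt_sq hm0).symm
    _ ≤ _ := Real.sqrt_le_sqrt hvar
  -- pointwise exponential bound
  have hptwise : ∀ᵐ ω ∂μ, Real.exp (lam * (f ω - b)) ≤
      1 + lam * (f ω - b) + lam ^ 2 * ‖Y ω‖ ^ 2 := by
    filter_upwards [hbd] with ω hω
    have habs : |lam * (f ω - b)| ≤ 1 := by
      rw [abs_mul, abs_of_nonneg hlam]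
      calc lam * |f ω - b| ≤ lam * R :=
            mul_le_mul_of_nonneg_left ((hfb ω).trans hω) hlam
      _ ≤ 1 := hlamR
    have h1 := (abs_le.mp (Real.abs_exp_sub_one_sub_id_le habs)).2
    have h2 : (lam * (f ω - b)) ^ 2 ≤ lam ^ 2 * ‖Y ω‖ ^ 2 := by
      rw [mul_pow]
      have h3 : (f ω - b) ^ 2 ≤ ‖Y ω‖ ^ 2 := by
        rw [← sq_abs]
        have := hfb ω
        nlinarith [abs_nonneg (f ω - b), norm_nonneg (Y ω)]
      nlinarith [sq_nonneg lam]
    linarith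
  have hexpm : Measurable fun ω => Real.exp (lam * (f ω - b)) :=
    (((hfm.sub_const b).const_mul lam)).exp
  have hexpint : Integrable (fun ω => Real.exp (lam * (f ω - b))) μ := by
    refine ⟨hexpm.aestronglyMeasurable, HasFiniteIntegral.of_bounded
      (C := Real.exp (lam * R)) ?_⟩
    filter_upwards [hbd] with ω hω
    rw [Real.norm_eq_abs, abs_of_nonneg (Real.exp_pos _).le]
    apply Real.exp_le_exp.mpr
    exact mul_le_mul_of_nonneg_left (((abs_le.mp (hfb ω)).2).trans hω) hlam
  have hmain : ∫ ω, Real.exp (lam * (f ω - b)) ∂μ ≤ 1 + lam * (m - b) + lam ^ 2 * σ2 := by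
    have hrhsint : Integrable (fun ω => 1 + lam * (f ω - b) + lam ^ 2 * ‖Y ω‖ ^ 2) μ :=
      ((integrable_const (1 : ℝ)).add
        (((show Integrable (fun ω => f ω - b) μ from
          hfint.sub (integrable_const b)).const_mul lam))).add (hY2int.const_mul (lam ^ 2))
    have := integral_mono_ae hexpint hrhsint hptwise
    refine this.trans_eq ?_
    rw [integral_add
        (show Integrable (fun ω => 1 + lam * (f ω - b)) μ from (integrable_const (1 : ℝ)).add
          ((show Integrable (fun ω => f ω - b) μ from
            hfint.sub (integrable_const b)).const_mul lam)) (hY2int.const_mul (lam ^ 2)),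
      integral_add (integrable_const (1 : ℝ))
        ((show Integrable (fun ω => f ω - b) μ from
          hfint.sub (integrable_const b)).const_mul lam),
      integral_const_mul, integral_const_mul,
      integral_sub hfint (integrable_const b), integral_const, integral_const]
    simp [measure_univ]
    rfl
  have hfinal : ∫ ω, Real.exp (lam * f ω) ∂μ ≤
      Real.exp (lam * b) * (1 + lam * (m - b) + lam ^ 2 * σ2) := by
    have heq : ∀ ω, Real.exp (lam * f ω) = Real.exp (lam * b) * Real.exp (lam * (f ω - b)) := by
      intro ω; rw [← Real.exp_add]; ring_nf
    simp_rw [heq]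
    rw [integral_const_mul]
    exact mul_le_mul_of_nonneg_left hmain (Real.exp_pos _).le
  have hbr : 1 + lam * (m - b) + lam ^ 2 * σ2 ≤
      Real.exp (lam * (Real.sqrt (b ^ 2 + σ2) - b) + lam ^ 2 * σ2) := by
    have h1 : lam * (m - b) ≤ lam * (Real.sqrt (b ^ 2 + σ2) - b) :=
      mul_le_mul_of_nonneg_left (by linarith) hlam
    have h2 := Real.add_one_le_exp (lam * (Real.sqrt (b ^ 2 + σ2) - b) + lam ^ 2 * σ2)
    linarith
  calc ∫ ω, Real.exp (lam * Real.sqrt (‖s + Y ω‖ ^ 2 + a)) ∂μ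
      = ∫ ω, Real.exp (lam * f ω) ∂μ := rfl
    _ ≤ Real.exp (lam * b) * (1 + lam * (m - b) + lam ^ 2 * σ2) := hfinal
    _ ≤ Real.exp (lam * b) * Real.exp (lam * (Real.sqrt (b ^ 2 + σ2) - b) + lam ^ 2 * σ2) :=
        mul_le_mul_of_nonneg_left hbr (Real.exp_pos _).le
    _ = Real.exp (lam * Real.sqrt (‖s‖ ^ 2 + a + σ2) + lam ^ 2 * σ2) := by
        rw [← Real.exp_add, hbsq]
        ring_nf

lemma ae_prod_mk {α β : Type*} [MeasurableSpace α] [MeasurableSpace β] {ν₁ : Measure α}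
    {ν₂ : Measure β} [SFinite ν₁] [SFinite ν₂] {p : α → Prop} {q : β → Prop}
    (hp : ∀ᵐ x ∂ν₁, p x) (hq : ∀ᵐ y ∂ν₂, q y) :
    ∀ᵐ z ∂ν₁.prod ν₂, p z.1 ∧ q z.2 := by
  have h1 : ∀ᵐ z ∂ν₁.prod ν₂, p z.1 := by
    rw [MeasureTheory.ae_iff] at hp ⊢
    have hset : {z : α × β | ¬ p z.1} = {x | ¬ p x} ×ˢ Set.univ := by
      ext ⟨x, y⟩; simp
    rw [hset, Measure.prod_prod, hp, zero_mul]
  have h2 : ∀ᵐ z ∂ν₁.prod ν₂, q z.2 := by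
    rw [MeasureTheory.ae_iff] at hq ⊢
    have hset : {z : α × β | ¬ q z.2} = Set.univ ×ˢ {y | ¬ q y} := by
      ext ⟨x, y⟩; simp
    rw [hset, Measure.prod_prod, hq, mul_zero]
  exact h1.and h2

lemma sqrt_sq_add_le_add_sqrt {x a : ℝ} (hx : 0 ≤ x) (ha : 0 ≤ a) :
    Real.sqrt (x ^ 2 + a) ≤ x + Real.sqrt a := by
  have h1 : x ^ 2 + a ≤ (x + Real.sqrt a) ^ 2 := by
    nlinarith [Real.sqrt_nonneg a, Real.sq_sqrt ha]
  calc Real.sqrt (x ^ 2 + a) ≤ Real.sqrt ((x + Real.sqrt a) ^ 2) := Real.sqrt_le_sqrt h1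
    _ = x + Real.sqrt a := Real.sqrt_sq (by positivity)

lemma sum_bound {n d : ℕ} {Ω : Type*} [MeasurableSpace Ω] (μ : Measure Ω)
    [IsProbabilityMeasure μ] (X : Fin n → Ω → EuclideanSpace ℝ (Fin d))
    (hmeas : ∀ i, Measurable (X i))
    (hindep : ProbabilityTheory.iIndepFun X μ)
    (hmean : ∀ i, ∫ ω, X i ω ∂μ = 0)
    (R lam : ℝ) (hR : ∀ i, ∀ᵐ ω ∂μ, ‖X i ω‖ ≤ R) (hR0 : 0 ≤ R)
    (hlam : 0 ≤ lam) (hlamR : lam * R ≤ 1) :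
    ∀ (u : Finset (Fin n)) (a : ℝ), 0 ≤ a →
      ∫ ω, Real.exp (lam * Real.sqrt (‖∑ i ∈ u, X i ω‖ ^ 2 + a)) ∂μ ≤
        Real.exp (lam * Real.sqrt (a + ∑ i ∈ u, ∫ ω, ‖X i ω‖ ^ 2 ∂μ) +
          lam ^ 2 * ∑ i ∈ u, ∫ ω, ‖X i ω‖ ^ 2 ∂μ) := by
  intro u
  induction u using Finset.induction_on with
  | empty =>
    intro a ha
    simp only [Finset.sum_empty, norm_zero, mul_zero, add_zero]
    rw [show (0 : ℝ) ^ 2 + a = a by ring, integral_const, probReal_univ,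
      one_smul]
  | @insert j u hj ih =>
    intro a ha
    set σj : ℝ := ∫ ω, ‖X j ω‖ ^ 2 ∂μ with hσjdef
    have hσj : 0 ≤ σj := integral_nonneg fun ω => by positivity
    set Y : Ω → EuclideanSpace ℝ (Fin d) := fun ω => ∑ i ∈ u, X i ω with hYdef
    have hYm : Measurable Y := Finset.measurable_sum u fun i _ => hmeas i
    have hindYZ : ProbabilityTheory.IndepFun Y (X j) μ := by
      have h := hindep.indepFun_finsetSum_of_notMem hmeas hj
      have heq : (∑ i ∈ u, X i) = Y := by funext ω; simp [hYdef]
      rwa [heq] at h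
    set ν₁ : Measure (EuclideanSpace ℝ (Fin d)) := Measure.map Y μ with hν₁def
    set ν₂ : Measure (EuclideanSpace ℝ (Fin d)) := Measure.map (X j) μ with hν₂def
    haveI : IsProbabilityMeasure ν₁ := Measure.isProbabilityMeasure_map hYm.aemeasurable
    haveI : IsProbabilityMeasure ν₂ := Measure.isProbabilityMeasure_map (hmeas j).aemeasurable
    have hmap : Measure.map (fun ω => (Y ω, X j ω)) μ = ν₁.prod ν₂ :=
      (ProbabilityTheory.indepFun_iff_map_prod_eq_prod_map_map hYm.aemeasurable
        (hmeas j).aemeasurable).mp hindYZ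
    set G : EuclideanSpace ℝ (Fin d) × EuclideanSpace ℝ (Fin d) → ℝ :=
      fun p => Real.exp (lam * Real.sqrt (‖p.1 + p.2‖ ^ 2 + a)) with hGdef
    have hGc : Continuous G := by
      apply Real.continuous_exp.comp
      apply continuous_const.mul
      apply Real.continuous_sqrt.comp
      exact (((continuous_fst.add continuous_snd).norm.pow 2).add continuous_const)
    have hGm : Measurable G := hGc.measurable
    -- a.e. bounds on the mapped measures
    have hae1 : ∀ᵐ y ∂ν₁, ‖y‖ ≤ u.card * R := by
      rw [hν₁def, MeasureTheory.ae_map_iff hYm.aemeasurable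
        (measurableSet_le measurable_norm measurable_const)]
      have hall : ∀ᵐ ω ∂μ, ∀ i, ‖X i ω‖ ≤ R := ae_all_iff.mpr hR
      filter_upwards [hall] with ω hω
      calc ‖Y ω‖ ≤ ∑ i ∈ u, ‖X i ω‖ := norm_sum_le _ _
        _ ≤ ∑ _i ∈ u, R := Finset.sum_le_sum fun i _ => hω i
        _ = u.card * R := by simp [Finset.sum_const, nsmul_eq_mul]
    have hae2 : ∀ᵐ z ∂ν₂, ‖z‖ ≤ R := by
      rw [hν₂def, MeasureTheory.ae_map_iff (hmeas j).aemeasurable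
        (measurableSet_le measurable_norm measurable_const)]
      exact hR j
    have haeprod : ∀ᵐ p ∂ν₁.prod ν₂, ‖p.1‖ ≤ u.card * R ∧ ‖p.2‖ ≤ R :=
      ae_prod_mk hae1 hae2
    have hGint : Integrable G (ν₁.prod ν₂) := by
      refine ⟨hGm.aestronglyMeasurable, HasFiniteIntegral.of_bounded
        (C := Real.exp (lam * ((u.card * R + R) + Real.sqrt a))) ?_⟩
      filter_upwards [haeprod] with p hp
      rw [Real.norm_eq_abs, abs_of_nonneg (Real.exp_pos _).le]
      apply Real.exp_le_exp.mpr
      apply mul_le_mul_of_nonneg_left ?_ hlam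
      calc Real.sqrt (‖p.1 + p.2‖ ^ 2 + a) ≤ ‖p.1 + p.2‖ + Real.sqrt a :=
            sqrt_sq_add_le_add_sqrt (norm_nonneg _) ha
        _ ≤ (u.card * R + R) + Real.sqrt a := by
            have := norm_add_le p.1 p.2
            linarith [hp.1, hp.2]
    -- the main chain
    have hsum : ∀ ω, (∑ i ∈ insert j u, X i ω) = Y ω + X j ω := by
      intro ω
      rw [Finset.sum_insert hj, add_comm]
    calc ∫ ω, Real.exp (lam * Real.sqrt (‖∑ i ∈ insert j u, X i ω‖ ^ 2 + a)) ∂μ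
        = ∫ ω, G (Y ω, X j ω) ∂μ := by
          apply integral_congr_ae
          apply Filter.Eventually.of_forall
          intro ω
          show Real.exp (lam * Real.sqrt (‖∑ i ∈ insert j u, X i ω‖ ^ 2 + a)) = G (Y ω, X j ω)
          rw [hsum ω]
      _ = ∫ p, G p ∂(ν₁.prod ν₂) := by
          rw [← hmap, integral_map (hYm.prodMk (hmeas j)).aemeasurable
            hGm.aestronglyMeasurable]
      _ = ∫ y, ∫ z, G (y, z) ∂ν₂ ∂ν₁ := integral_prod G hGint
      _ ≤ ∫ y, Real.exp (lam * Real.sqrt (‖y‖ ^ 2 + (a + σj)) + lam ^ 2 * σj) ∂ν₁ := by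
          refine integral_mono_ae hGint.integral_prod_left ?_ ?_
          · refine ⟨(Real.measurable_exp.comp ((((measurable_norm.pow_const 2).add_const
              (a + σj)).sqrt.const_mul lam).add_const (lam ^ 2 * σj))).aestronglyMeasurable,
              HasFiniteIntegral.of_bounded
                (C := Real.exp (lam * (u.card * R + Real.sqrt (a + σj)) + lam ^ 2 * σj)) ?_⟩
            filter_upwards [hae1] with y hy
            rw [Real.norm_eq_abs, abs_of_nonneg (Real.exp_pos _).le]
            apply Real.exp_le_exp.mpr
            have h1 : Real.sqrt (‖y‖ ^ 2 + (a + σj)) ≤ u.card * R + Real.sqrt (a + σj) := by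
              calc Real.sqrt (‖y‖ ^ 2 + (a + σj)) ≤ ‖y‖ + Real.sqrt (a + σj) :=
                    sqrt_sq_add_le_add_sqrt (norm_nonneg _) (by positivity)
                _ ≤ _ := by linarith
            have := mul_le_mul_of_nonneg_left h1 hlam
            linarith
          · apply Filter.Eventually.of_forall
            intro y
            show (∫ z, G (y, z) ∂ν₂) ≤
              Real.exp (lam * Real.sqrt (‖y‖ ^ 2 + (a + σj)) + lam ^ 2 * σj)
            have hinner : ∫ z, G (y, z) ∂ν₂ =
                ∫ ω, Real.exp (lam * Real.sqrt (‖y + X j ω‖ ^ 2 + a)) ∂μ := by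
              rw [hν₂def, integral_map (hmeas j).aemeasurable]
              exact (hGc.comp (Continuous.prodMk_right y)).aestronglyMeasurable
            rw [hinner]
            have hstep := step_bound μ (X j) (hmeas j) (hmean j) R lam a (hR j) hlam hlamR ha y
            rw [show ‖y‖ ^ 2 + (a + σj) = ‖y‖ ^ 2 + a + σj by ring]
            exact hstep
      _ = Real.exp (lam ^ 2 * σj) *
            ∫ y, Real.exp (lam * Real.sqrt (‖y‖ ^ 2 + (a + σj))) ∂ν₁ := by
          simp_rw [Real.exp_add]
          rw [integral_mul_const]
          ring
      _ = Real.exp (lam ^ 2 * σj) *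
            ∫ ω, Real.exp (lam * Real.sqrt (‖Y ω‖ ^ 2 + (a + σj))) ∂μ := by
          congr 1
          rw [hν₁def, integral_map hYm.aemeasurable]
          exact (Real.continuous_exp.comp (continuous_const.mul (Real.continuous_sqrt.comp
            ((continuous_norm.pow 2).add continuous_const)))).aestronglyMeasurable
      _ ≤ Real.exp (lam ^ 2 * σj) *
            Real.exp (lam * Real.sqrt ((a + σj) + ∑ i ∈ u, ∫ ω, ‖X i ω‖ ^ 2 ∂μ) +
              lam ^ 2 * ∑ i ∈ u, ∫ ω, ‖X i ω‖ ^ 2 ∂μ) :=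
          mul_le_mul_of_nonneg_left (ih (a + σj) (by positivity)) (Real.exp_pos _).le
      _ = Real.exp (lam * Real.sqrt (a + ∑ i ∈ insert j u, ∫ ω, ‖X i ω‖ ^ 2 ∂μ) +
            lam ^ 2 * ∑ i ∈ insert j u, ∫ ω, ‖X i ω‖ ^ 2 ∂μ) := by
          rw [← Real.exp_add, Finset.sum_insert hj]
          rw [show a + σj + ∑ i ∈ u, ∫ ω, ‖X i ω‖ ^ 2 ∂μ =
            a + (σj + ∑ i ∈ u, ∫ ω, ‖X i ω‖ ^ 2 ∂μ) by ring]
          rw [← hσjdef]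
          ring_nf


/-- vector Bernstein inequality, Lemma 8.2: if `X 1, …, X n` are
independent centered random vectors in `ℝ^d`, bounded by `R` almost surely and with
total variance at most `V`, then for `0 < t ≤ V / R`,
`P(‖∑ i, X i‖ ≥ √V + t) ≤ exp(−t²/(4V))`. -/
theorem stmt13 (n d : ℕ)
    {Ω : Type*} [MeasurableSpace Ω] (μ : MeasureTheory.Measure Ω)
    [MeasureTheory.IsProbabilityMeasure μ]
    (X : Fin n → Ω → EuclideanSpace ℝ (Fin d))
    (hmeas : ∀ i, Measurable (X i))
    (hindep : ProbabilityTheory.iIndepFun X μ)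
    (hmean : ∀ i, ∫ ω, X i ω ∂μ = 0)
    (R : ℝ) (hR : ∀ i, ∀ᵐ ω ∂μ, ‖X i ω‖ ≤ R)
    (V : ℝ) (hV : 0 < V)
    (hvar : ∑ i : Fin n, ∫ ω, ‖X i ω‖ ^ 2 ∂μ ≤ V)
    (t : ℝ) (ht0 : 0 < t) (htV : t ≤ V / R) :
    μ {ω | Real.sqrt V + t ≤ ‖∑ i : Fin n, X i ω‖} ≤
      ENNReal.ofReal (Real.exp (-t ^ 2 / (4 * V))) := by
  classical
  have hRpos : 0 < R := by
    by_contra h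
    push_neg at h
    rcases lt_or_eq_of_le h with h' | h'
    · have : V / R < 0 := div_neg_of_pos_of_neg hV h'
      linarith
    · rw [h', div_zero] at htV
      linarith
  set lam : ℝ := t / (2 * V) with hlamdef
  have hlam0 : 0 < lam := by positivity
  have htR : t * R ≤ V := by
    rw [le_div_iff₀ hRpos] at htV; exact htV
  have hlamR : lam * R ≤ 1 := by
    rw [hlamdef, div_mul_eq_mul_div, div_le_one (by positivity)]
    linarith
  set W : ℝ := ∑ i : Fin n, ∫ ω, ‖X i ω‖ ^ 2 ∂μ with hWdef
  have hW0 : 0 ≤ W :=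
    Finset.sum_nonneg fun i _ => integral_nonneg fun ω => by positivity
  have key := sum_bound μ X hmeas hindep hmean R lam hR hRpos.le hlam0.le hlamR
    Finset.univ 0 le_rfl
  have hZm : Measurable fun ω => ‖∑ i : Fin n, X i ω‖ :=
    (Finset.measurable_sum Finset.univ fun i _ => hmeas i).norm
  have hmgf : ∫ ω, Real.exp (lam * ‖∑ i : Fin n, X i ω‖) ∂μ ≤
      Real.exp (lam * Real.sqrt V + lam ^ 2 * V) := by
    have heq : ∀ ω : Ω,
        Real.sqrt (‖∑ i ∈ Finset.univ, X i ω‖ ^ 2 + 0) = ‖∑ i : Fin n, X i ω‖ := by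
      intro ω; rw [add_zero, Real.sqrt_sq (norm_nonneg _)]
    calc ∫ ω, Real.exp (lam * ‖∑ i : Fin n, X i ω‖) ∂μ
        = ∫ ω, Real.exp (lam * Real.sqrt (‖∑ i ∈ Finset.univ, X i ω‖ ^ 2 + 0)) ∂μ := by
          apply integral_congr_ae
          apply Filter.Eventually.of_forall
          intro ω
          simp only [heq]
      _ ≤ Real.exp (lam * Real.sqrt (0 + W) + lam ^ 2 * W) := key
      _ ≤ Real.exp (lam * Real.sqrt V + lam ^ 2 * V) := by
          apply Real.exp_le_exp.mpr
          have h1 : Real.sqrt (0 + W) ≤ Real.sqrt V :=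
            Real.sqrt_le_sqrt (by rw [zero_add]; exact hvar)
          have h2 := mul_le_mul_of_nonneg_left h1 hlam0.le
          nlinarith [sq_nonneg lam]
  have hZbd : ∀ᵐ ω ∂μ, ‖∑ i : Fin n, X i ω‖ ≤ n * R := by
    have hall : ∀ᵐ ω ∂μ, ∀ i, ‖X i ω‖ ≤ R := ae_all_iff.mpr hR
    filter_upwards [hall] with ω hω
    calc ‖∑ i : Fin n, X i ω‖ ≤ ∑ i : Fin n, ‖X i ω‖ := norm_sum_le _ _
      _ ≤ ∑ _i : Fin n, R := Finset.sum_le_sum fun i _ => hω i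
      _ = n * R := by simp [Finset.sum_const, nsmul_eq_mul, Finset.card_univ]
  have hint : Integrable (fun ω => Real.exp (lam * ‖∑ i : Fin n, X i ω‖)) μ := by
    refine ⟨((hZm.const_mul lam).exp).aestronglyMeasurable, HasFiniteIntegral.of_bounded
      (C := Real.exp (lam * (n * R))) ?_⟩
    filter_upwards [hZbd] with ω hω
    rw [Real.norm_eq_abs, abs_of_nonneg (Real.exp_pos _).le]
    exact Real.exp_le_exp.mpr (mul_le_mul_of_nonneg_left hω hlam0.le)
  have hcher := ProbabilityTheory.measure_ge_le_exp_mul_mgf (μ := μ)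
    (X := fun ω => ‖∑ i : Fin n, X i ω‖) (Real.sqrt V + t) hlam0.le hint
  have hmgfdef : ProbabilityTheory.mgf (fun ω => ‖∑ i : Fin n, X i ω‖) μ lam
      = ∫ ω, Real.exp (lam * ‖∑ i : Fin n, X i ω‖) ∂μ := rfl
  have hfin : (μ {ω | Real.sqrt V + t ≤ ‖∑ i : Fin n, X i ω‖}).toReal ≤
      Real.exp (-t ^ 2 / (4 * V)) := by
    refine hcher.trans ?_
    rw [hmgfdef]
    calc Real.exp (-lam * (Real.sqrt V + t)) *
          ∫ ω, Real.exp (lam * ‖∑ i : Fin n, X i ω‖) ∂μ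
        ≤ Real.exp (-lam * (Real.sqrt V + t)) *
            Real.exp (lam * Real.sqrt V + lam ^ 2 * V) :=
          mul_le_mul_of_nonneg_left hmgf (Real.exp_pos _).le
      _ = Real.exp (-t ^ 2 / (4 * V)) := by
          rw [← Real.exp_add]
          congr 1
          rw [hlamdef]
          field_simp
          ring
  calc μ {ω | Real.sqrt V + t ≤ ‖∑ i : Fin n, X i ω‖}
      = ENNReal.ofReal ((μ {ω | Real.sqrt V + t ≤ ‖∑ i : Fin n, X i ω‖}).toReal) :=
        (ENNReal.ofReal_toReal (measure_ne_top μ _)).symm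
    _ ≤ ENNReal.ofReal (Real.exp (-t ^ 2 / (4 * V))) := ENNReal.ofReal_le_ofReal hfin
end
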